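/- arXiv:1405.7553 — 3 statements merged into one kernel-verified Lean document; each statement's English description precedes it below -/
import Mathlib

section
/- The Jacobi triple product identity holds: (∑_{n∈ℤ} t^n q^{n²/2}) / ∏_{n≥1}(1−q^n) = ∏_{n≥1}(1+t q^{n−1/2})(1+t^{−1} q^{n−1/2}), as an identity of formal power series (equivalently, after substituting q = u², ∑_{n∈ℤ} t^n u^{n²} = ∏_{n≥1}(1−u^{2n})(1+t u^{2n−1})(1+t^{−1} u^{2n−1})). -/
open PowerSeries LaurentPolynomial Finset

namespace JTP

abbrev S : Type := PowerSeries (LaurentPolynomial ℤ)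

noncomputable def q (j : ℕ) : S := PowerSeries.X ^ (2 * j)

lemma q_mul (i j : ℕ) : q i * q j = q (i + j) := by
  simp [q, ← pow_add, Nat.mul_add]

/-- Gaussian binomial coefficient `[a choose b]` in the variable `q = X²`. -/
noncomputable def G : ℕ → ℕ → S
  | _, 0 => 1
  | 0, _+1 => 0
  | a+1, b+1 => G a b + q (b+1) * G a (b+1)

@[simp] lemma G_zero_right (a : ℕ) : G a 0 = 1 := by cases a <;> rfl

lemma G_succ_succ (a b : ℕ) : G (a+1) (b+1) = G a b + q (b+1) * G a (b+1) := rfl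

lemma G_gt : ∀ {a b : ℕ}, a < b → G a b = 0 := by
  intro a
  induction a with
  | zero => intro b hb; cases b with
    | zero => omega
    | succ b => rfl
  | succ a ih =>
    intro b hb
    cases b with
    | zero => omega
    | succ b => rw [G_succ_succ, ih (by omega), ih (by omega), mul_zero, add_zero]

lemma G_diag (a : ℕ) : G a a = 1 := by
  induction a with
  | zero => rfl
  | succ a ih => rw [G_succ_succ, ih, G_gt (by omega), mul_zero, add_zero]

/-- `D b = ∏_{j=1}^{b} (1 - q^j)`. -/
noncomputable def D (b : ℕ) : S := ∏ j ∈ Ioc 0 b, (1 - q j)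

/-- `E a b = ∏_{j=a-b+1}^{a} (1 - q^j)`. -/
noncomputable def E (a b : ℕ) : S := ∏ j ∈ Ioc (a - b) a, (1 - q j)

@[simp] lemma D_zero : D 0 = 1 := by simp [D]

lemma D_succ (b : ℕ) : D (b+1) = D b * (1 - q (b+1)) := by
  rw [D, D, Finset.prod_Ioc_succ_top (by omega)]

@[simp] lemma E_zero_right (a : ℕ) : E a 0 = 1 := by simp [E]

lemma E_succ_both {a b : ℕ} (h : b ≤ a) : E (a+1) (b+1) = E a b * (1 - q (a+1)) := by
  rw [E, E, show a + 1 - (b+1) = a - b by omega, Finset.prod_Ioc_succ_top (by omega)]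

lemma E_succ_right {a b : ℕ} (h : b < a) : E a (b+1) = (1 - q (a - b)) * E a b := by
  obtain ⟨c, hc⟩ : ∃ c, a - b = c + 1 := ⟨a - b - 1, by omega⟩
  rw [E, E, show a - (b+1) = c by omega, hc,
    ← Finset.prod_Ioc_consecutive _ (show c ≤ c + 1 by omega) (show c + 1 ≤ a by omega),
    Nat.Ioc_succ_singleton, Finset.prod_singleton]

lemma star : ∀ {a b : ℕ}, b ≤ a → G a b * D b = E a b := by
  intro a
  induction a with
  | zero => intro b hb; interval_cases b; simp
  | succ a ih =>
    intro b hb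
    cases b with
    | zero => simp
    | succ b =>
      rcases Nat.lt_or_ge b a with h | h
      · have h1 : G a b * D b = E a b := ih (by omega)
        have h2 : G a (b+1) * D (b+1) = E a (b+1) := ih (by omega)
        rw [E_succ_right h, D_succ] at h2
        have e4 : q (b+1) * q (a - b) = q (a+1) := by
          rw [q_mul, show b + 1 + (a - b) = a + 1 by omega]
        rw [G_succ_succ, E_succ_both (show b ≤ a by omega), D_succ]
        linear_combination (1 - q (b+1)) * h1 + q (b+1) * h2 - E a b * e4
      · have hba : b = a := by omega
        subst hba
        rw [G_succ_succ, G_gt (Nat.lt_succ_self b), mul_zero, add_zero, D_succ,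
          ← mul_assoc, ih le_rfl, E_succ_both le_rfl]

lemma isUnit_D (b : ℕ) : IsUnit (D b) := by
  rw [D]
  refine Finset.prod_induction _ IsUnit (fun x y hx hy => hx.mul hy) isUnit_one ?_
  intro j hj
  rw [PowerSeries.isUnit_iff_constantCoeff]
  have hj0 : 0 < j := (Finset.mem_Ioc.mp hj).1
  simp [q, zero_pow (show 2 * j ≠ 0 by omega)]

lemma pascal2 {a b : ℕ} (h : b ≤ a) :
    G (a+1) (b+1) = q (a - b) * G a b + G a (b+1) := by
  rcases Nat.lt_or_ge b a with hlt | hge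
  · apply (isUnit_D (b+1)).mul_left_cancel
    have e1 : G (a+1) (b+1) * D (b+1) = E a b * (1 - q (a+1)) := by
      rw [star (by omega), E_succ_both (by omega)]
    have e2 : G a b * D b = E a b := star (by omega)
    have e3 : G a (b+1) * D (b+1) = (1 - q (a - b)) * E a b := by
      rw [star (by omega), E_succ_right hlt]
    have e4 : q (a - b) * q (b+1) = q (a+1) := by
      rw [q_mul, show a - b + (b + 1) = a + 1 by omega]
    have e5 : D (b+1) = D b * (1 - q (b+1)) := D_succ b
    linear_combination e1 - q (a - b) * (1 - q (b+1)) * e2 - e3 -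
      (q (a - b) * G a b) * e5 + E a b * e4
  · have hba : b = a := by omega
    subst hba
    simp [G_succ_succ, G_gt (Nat.lt_succ_self b), q]

lemma G_symm : ∀ {a b : ℕ}, b ≤ a → G a b = G a (a - b) := by
  intro a
  induction a with
  | zero => intro b hb; interval_cases b; rfl
  | succ a ih =>
    intro b hb
    cases b with
    | zero => rw [Nat.sub_zero, G_zero_right, G_diag]
    | succ b =>
      rcases Nat.lt_or_ge b a with h | h
      · rw [G_succ_succ, show a + 1 - (b+1) = (a - (b+1)) + 1 by omega,
          pascal2 (show a - (b+1) ≤ a by omega),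
          show a - (a - (b+1)) = b + 1 by omega,
          ← ih (show b + 1 ≤ a by omega),
          show (a - (b+1)) + 1 = a - b by omega,
          ← ih (show b ≤ a by omega)]
        ring
      · have hba : b = a := by omega
        subst hba
        rw [Nat.sub_self, G_zero_right, G_diag]


lemma dbl0 {a : ℕ} : G (a+2) 1 = (1 + q (a+1)) * G a 0 + q 1 * G a 1 := by
  have h1 : G (a+2) 1 = G (a+1) 0 + q 1 * G (a+1) 1 := G_succ_succ (a+1) 0
  have h2 : G (a+1) 1 = q a * G a 0 + G a 1 := by
    simpa using pascal2 (show 0 ≤ a by omega)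
  have e4 : q 1 * q a = q (a + 1) := by rw [q_mul, Nat.add_comm]
  rw [h1, h2, G_zero_right, G_zero_right]
  linear_combination e4

lemma dbl' {a c : ℕ} (hc : c + 1 ≤ a) :
    G (a+2) (c+2) = q (a-c) * G a c + (1 + q (a+1)) * G a (c+1) + q (c+2) * G a (c+2) := by
  have h1 : G (a+2) (c+2) = G (a+1) (c+1) + q (c+2) * G (a+1) (c+2) := G_succ_succ (a+1) (c+1)
  have h2 : G (a+1) (c+1) = q (a - c) * G a c + G a (c+1) := pascal2 (by omega)
  have h3 : G (a+1) (c+2) = q (a - (c+1)) * G a (c+1) + G a (c+2) := pascal2 (by omega)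
  have e4 : q (c+2) * q (a - (c+1)) = q (a+1) := by
    rw [q_mul, show c + 2 + (a - (c+1)) = a + 1 by omega]
  rw [h1, h2, h3]
  linear_combination G a (c+1) * e4

/-- Gaussian binomial with integer lower index, zero for negative index. -/
noncomputable def Gz (a : ℕ) (b : ℤ) : S := if 0 ≤ b then G a b.toNat else 0

lemma Gz_of_nonneg {a : ℕ} {b : ℤ} (h : 0 ≤ b) : Gz a b = G a b.toNat := if_pos h

lemma Gz_of_neg {a : ℕ} {b : ℤ} (h : b < 0) : Gz a b = 0 := if_neg (by omega)

lemma Gz_of_gt {a : ℕ} {b : ℤ} (h : (a : ℤ) < b) : Gz a b = 0 := by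
  rw [Gz_of_nonneg (by omega), G_gt (by omega)]

lemma natAbs_sub_one (n : ℤ) :
    (((n-1).natAbs^2 : ℕ) : ℤ) = ((n.natAbs^2 : ℕ) : ℤ) - 2*n + 1 := by
  rw [Nat.cast_pow, Nat.cast_pow, Int.natAbs_sq, Int.natAbs_sq]; ring

lemma natAbs_add_one (n : ℤ) :
    (((n+1).natAbs^2 : ℕ) : ℤ) = ((n.natAbs^2 : ℕ) : ℤ) + 2*n + 1 := by
  rw [Nat.cast_pow, Nat.cast_pow, Int.natAbs_sq, Int.natAbs_sq]; ring

/-- The key recurrence for one step of the triple-product induction. -/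
lemma rec_step (m : ℕ) (n : ℤ) (h1 : -((m:ℤ)+1) ≤ n) (h2 : n ≤ (m:ℤ)+1) :
    Gz (2*m+2) ((m:ℤ)+1+n) * (X:S) ^ (n.natAbs^2) =
      Gz (2*m) ((m:ℤ)+n) * (X:S) ^ (n.natAbs^2) +
      Gz (2*m) ((m:ℤ)+n) * (X:S) ^ (n.natAbs^2 + (4*m+2)) +
      Gz (2*m) ((m:ℤ)+n-1) * (X:S) ^ ((n-1).natAbs^2 + (2*m+1)) +
      Gz (2*m) ((m:ℤ)+n+1) * (X:S) ^ ((n+1).natAbs^2 + (2*m+1)) := by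
  have hA1 := natAbs_sub_one n
  have hA2 := natAbs_add_one n
  rcases eq_or_lt_of_le h2 with rfl | h2'
  · -- n = m+1
    have hA : Gz (2*m+2) ((m:ℤ)+1+((m:ℤ)+1)) = G (2*m+2) (2*m+2) := by
      rw [Gz_of_nonneg (by omega), show ((m:ℤ)+1+((m:ℤ)+1)).toNat = 2*m+2 from by omega]
    have hB : Gz (2*m) ((m:ℤ)+((m:ℤ)+1)) = 0 := Gz_of_gt (by omega)
    have hC : Gz (2*m) ((m:ℤ)+((m:ℤ)+1)-1) = G (2*m) (2*m) := by
      rw [Gz_of_nonneg (by omega), show ((m:ℤ)+((m:ℤ)+1)-1).toNat = 2*m from by omega]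
    have hD : Gz (2*m) ((m:ℤ)+((m:ℤ)+1)+1) = 0 := Gz_of_gt (by omega)
    rw [hA, hB, hC, hD, G_diag, G_diag]
    have hexp : ((m:ℤ)+1).natAbs^2 = ((m:ℤ)+1-1).natAbs^2 + (2*m+1) := by omega
    rw [hexp]; ring
  rcases eq_or_lt_of_le h1 with rfl | h1'
  · -- n = -(m+1)
    have hA : Gz (2*m+2) ((m:ℤ)+1+ -((m:ℤ)+1)) = G (2*m+2) 0 := by
      rw [Gz_of_nonneg (by omega), show ((m:ℤ)+1+ -((m:ℤ)+1)).toNat = 0 from by omega]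
    have hB : Gz (2*m) ((m:ℤ)+ -((m:ℤ)+1)) = 0 := Gz_of_neg (by omega)
    have hC : Gz (2*m) ((m:ℤ)+ -((m:ℤ)+1)-1) = 0 := Gz_of_neg (by omega)
    have hD : Gz (2*m) ((m:ℤ)+ -((m:ℤ)+1)+1) = G (2*m) 0 := by
      rw [Gz_of_nonneg (by omega), show ((m:ℤ)+ -((m:ℤ)+1)+1).toNat = 0 from by omega]
    rw [hA, hB, hC, hD]
    simp only [G_zero_right]
    have hexp : (-((m:ℤ)+1)).natAbs^2 = (-((m:ℤ)+1)+1).natAbs^2 + (2*m+1) := by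
      have k1 : (((-((m:ℤ)+1)).natAbs^2 : ℕ) : ℤ) = ((m:ℤ)+1)^2 := by
        rw [Nat.cast_pow, Int.natAbs_sq]; ring
      have k2 : (((-((m:ℤ)+1)+1).natAbs^2 : ℕ) : ℤ) = ((m:ℤ))^2 := by
        rw [Nat.cast_pow, Int.natAbs_sq]; ring
      have k3 : ((m:ℤ)+1)^2 = ((m:ℤ))^2 + (2*(m:ℤ)+1) := by ring
      omega
    rw [hexp]; ring
  -- interior : -m ≤ n ≤ m
  rcases eq_or_lt_of_le (show (0:ℤ) ≤ (m:ℤ)+n by omega) with hz | hpos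
  · -- m + n = 0
    have hA : Gz (2*m+2) ((m:ℤ)+1+n) = G (2*m+2) 1 := by
      rw [Gz_of_nonneg (by omega), show ((m:ℤ)+1+n).toNat = 1 from by omega]
    have hB : Gz (2*m) ((m:ℤ)+n) = G (2*m) 0 := by
      rw [Gz_of_nonneg (by omega), show ((m:ℤ)+n).toNat = 0 from by omega]
    have hC : Gz (2*m) ((m:ℤ)+n-1) = 0 := Gz_of_neg (by omega)
    have hD : Gz (2*m) ((m:ℤ)+n+1) = G (2*m) 1 := by
      rw [Gz_of_nonneg (by omega), show ((m:ℤ)+n+1).toNat = 1 from by omega]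
    rw [hA, hB, hC, hD, dbl0, G_zero_right]
    have he2 : 2*1 + n.natAbs^2 = (n+1).natAbs^2 + (2*m+1) := by omega
    rw [← he2, show n.natAbs^2 + (4*m+2) = 2*(2*m+1) + n.natAbs^2 by ring]
    simp only [q]
    ring
  · -- m + n ≥ 1
    obtain ⟨c, hc⟩ : ∃ c : ℕ, (m:ℤ) + n = (c:ℤ) + 1 := ⟨((m:ℤ)+n).toNat - 1, by omega⟩
    have hA : Gz (2*m+2) ((m:ℤ)+1+n) = G (2*m+2) (c+2) := by
      rw [Gz_of_nonneg (by omega), show ((m:ℤ)+1+n).toNat = c+2 from by omega]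
    have hB : Gz (2*m) ((m:ℤ)+n) = G (2*m) (c+1) := by
      rw [Gz_of_nonneg (by omega), show ((m:ℤ)+n).toNat = c+1 from by omega]
    have hC : Gz (2*m) ((m:ℤ)+n-1) = G (2*m) c := by
      rw [Gz_of_nonneg (by omega), show ((m:ℤ)+n-1).toNat = c from by omega]
    have hD : Gz (2*m) ((m:ℤ)+n+1) = G (2*m) (c+2) := by
      rw [Gz_of_nonneg (by omega), show ((m:ℤ)+n+1).toNat = c+2 from by omega]
    rw [hA, hB, hC, hD, dbl' (show c + 1 ≤ 2*m by omega)]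
    have he1 : 2*(2*m - c) + n.natAbs^2 = (n-1).natAbs^2 + (2*m+1) := by omega
    have he2 : 2*(c+2) + n.natAbs^2 = (n+1).natAbs^2 + (2*m+1) := by omega
    rw [← he1, ← he2, show n.natAbs^2 + (4*m+2) = 2*(2*m+1) + n.natAbs^2 by ring]
    simp only [q]
    ring


noncomputable def CT (n : ℤ) : S := PowerSeries.C (R := LaurentPolynomial ℤ) (T n)

lemma CT_mul (a b : ℤ) : CT a * CT b = CT (a+b) := by
  rw [CT, CT, CT, ← map_mul, ← T_add]

@[simp] lemma CT_zero : CT 0 = 1 := by simp [CT, T_zero]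

/-- Partial theta sum with Gaussian binomial corrections. -/
noncomputable def Th (m : ℕ) : S :=
  ∑ n ∈ Finset.Icc (-(m:ℤ)) (m:ℤ), CT n * (Gz (2*m) ((m:ℤ)+n) * (X:S) ^ (n.natAbs^2))

lemma Th_succ (m : ℕ) :
    Th (m+1) = Th m * (1 + (X:S)^(4*m+2) + (CT 1 + CT (-1)) * (X:S)^(2*m+1)) := by
  have hcast : ((m+1 : ℕ) : ℤ) = (m:ℤ)+1 := by push_cast; ring
  have h2m : 2*(m+1) = 2*m+2 := by ring
  rw [Th, hcast, h2m]
  calc ∑ n ∈ Finset.Icc (-((m:ℤ)+1)) ((m:ℤ)+1),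
          CT n * (Gz (2*m+2) ((m:ℤ)+1+n) * (X:S) ^ (n.natAbs^2))
      = ∑ n ∈ Finset.Icc (-((m:ℤ)+1)) ((m:ℤ)+1),
          (CT n * (Gz (2*m) ((m:ℤ)+n) * (X:S) ^ (n.natAbs^2))
          + CT n * (Gz (2*m) ((m:ℤ)+n) * (X:S) ^ (n.natAbs^2 + (4*m+2)))
          + CT n * (Gz (2*m) ((m:ℤ)+n-1) * (X:S) ^ ((n-1).natAbs^2 + (2*m+1)))
          + CT n * (Gz (2*m) ((m:ℤ)+n+1) * (X:S) ^ ((n+1).natAbs^2 + (2*m+1)))) := by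
        refine Finset.sum_congr rfl fun n hn => ?_
        obtain ⟨hn1, hn2⟩ := Finset.mem_Icc.mp hn
        rw [rec_step m n (by omega) (by omega)]
        ring
    _ = (∑ n ∈ Finset.Icc (-((m:ℤ)+1)) ((m:ℤ)+1),
            CT n * (Gz (2*m) ((m:ℤ)+n) * (X:S) ^ (n.natAbs^2)))
        + (∑ n ∈ Finset.Icc (-((m:ℤ)+1)) ((m:ℤ)+1),
            CT n * (Gz (2*m) ((m:ℤ)+n) * (X:S) ^ (n.natAbs^2 + (4*m+2))))
        + (∑ n ∈ Finset.Icc (-((m:ℤ)+1)) ((m:ℤ)+1),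
            CT n * (Gz (2*m) ((m:ℤ)+n-1) * (X:S) ^ ((n-1).natAbs^2 + (2*m+1))))
        + (∑ n ∈ Finset.Icc (-((m:ℤ)+1)) ((m:ℤ)+1),
            CT n * (Gz (2*m) ((m:ℤ)+n+1) * (X:S) ^ ((n+1).natAbs^2 + (2*m+1)))) := by
        simp only [Finset.sum_add_distrib]
    _ = Th m + Th m * (X:S)^(4*m+2) + Th m * (CT 1 * (X:S)^(2*m+1))
        + Th m * (CT (-1) * (X:S)^(2*m+1)) := by
        congr 1
        congr 1
        congr 1
        · -- first sum = Th m
          refine (Finset.sum_subset (Finset.Icc_subset_Icc (by omega) (by omega)) ?_).symm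
          intro x hx hnx
          rw [Finset.mem_Icc] at hx hnx
          push_neg at hnx
          rcases lt_or_ge (m:ℤ) x with h | h
          · rw [Gz_of_gt (by push_cast; omega), zero_mul, mul_zero]
          · rw [Gz_of_neg (by omega), zero_mul, mul_zero]
        · -- second sum
          rw [← Finset.sum_subset (Finset.Icc_subset_Icc
              (show -((m:ℤ)+1) ≤ -(m:ℤ) by omega) (show (m:ℤ) ≤ (m:ℤ)+1 by omega)) ?_]
          · rw [Th, Finset.sum_mul]
            refine Finset.sum_congr rfl fun n hn => ?_
            rw [pow_add]
            ring
          · intro x hx hnx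
            rw [Finset.mem_Icc] at hx hnx
            push_neg at hnx
            rcases lt_or_ge (m:ℤ) x with h | h
            · rw [Gz_of_gt (by push_cast; omega), zero_mul, mul_zero]
            · rw [Gz_of_neg (by omega), zero_mul, mul_zero]
        · -- third sum : shift n ↦ n+1
          have hmap : Finset.Icc (-((m:ℤ)+1)) ((m:ℤ)+1)
              = (Finset.Icc (-((m:ℤ)+2)) ((m:ℤ))).map (addRightEmbedding 1) := by
            rw [Finset.map_add_right_Icc]
            congr 1 <;> ring
          rw [hmap, Finset.sum_map]
          simp only [addRightEmbedding_apply]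
          calc ∑ k ∈ Finset.Icc (-((m:ℤ)+2)) ((m:ℤ)),
                CT (k+1) * (Gz (2*m) ((m:ℤ)+(k+1)-1) * (X:S) ^ ((k+1-1).natAbs^2 + (2*m+1)))
              = ∑ k ∈ Finset.Icc (-((m:ℤ)+2)) ((m:ℤ)),
                CT (k+1) * (Gz (2*m) ((m:ℤ)+k) * (X:S) ^ (k.natAbs^2 + (2*m+1))) := by
                refine Finset.sum_congr rfl fun k hk => ?_
                rw [show (m:ℤ)+(k+1)-1 = (m:ℤ)+k from by ring, show k+1-1 = k from by ring]
            _ = ∑ k ∈ Finset.Icc (-(m:ℤ)) ((m:ℤ)),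
                CT (k+1) * (Gz (2*m) ((m:ℤ)+k) * (X:S) ^ (k.natAbs^2 + (2*m+1))) := by
                refine (Finset.sum_subset (Finset.Icc_subset_Icc (by omega) (by omega)) ?_).symm
                intro x hx hnx
                rw [Finset.mem_Icc] at hx hnx
                push_neg at hnx
                rw [Gz_of_neg (by omega), zero_mul, mul_zero]
            _ = Th m * (CT 1 * (X:S)^(2*m+1)) := by
                rw [Th, Finset.sum_mul]
                refine Finset.sum_congr rfl fun k hk => ?_
                rw [← CT_mul, pow_add]
                ring
        · -- fourth sum : shift n ↦ n-1
          have hmap : Finset.Icc (-((m:ℤ)+1)) ((m:ℤ)+1)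
              = (Finset.Icc (-(m:ℤ)) ((m:ℤ)+2)).map (addRightEmbedding (-1)) := by
            rw [Finset.map_add_right_Icc]
            congr 1 <;> ring
          rw [hmap, Finset.sum_map]
          simp only [addRightEmbedding_apply]
          calc ∑ k ∈ Finset.Icc (-(m:ℤ)) ((m:ℤ)+2),
                CT (k+(-1)) * (Gz (2*m) ((m:ℤ)+(k+(-1))+1) * (X:S) ^ ((k+(-1)+1).natAbs^2 + (2*m+1)))
              = ∑ k ∈ Finset.Icc (-(m:ℤ)) ((m:ℤ)+2),
                CT (k+(-1)) * (Gz (2*m) ((m:ℤ)+k) * (X:S) ^ (k.natAbs^2 + (2*m+1))) := by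
                refine Finset.sum_congr rfl fun k hk => ?_
                rw [show (m:ℤ)+(k+(-1))+1 = (m:ℤ)+k from by ring, show k+(-1)+1 = k from by ring]
            _ = ∑ k ∈ Finset.Icc (-(m:ℤ)) ((m:ℤ)),
                CT (k+(-1)) * (Gz (2*m) ((m:ℤ)+k) * (X:S) ^ (k.natAbs^2 + (2*m+1))) := by
                refine (Finset.sum_subset (Finset.Icc_subset_Icc (by omega) (by omega)) ?_).symm
                intro x hx hnx
                rw [Finset.mem_Icc] at hx hnx
                push_neg at hnx
                rw [Gz_of_gt (by push_cast; omega), zero_mul, mul_zero]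
            _ = Th m * (CT (-1) * (X:S)^(2*m+1)) := by
                rw [Th, Finset.sum_mul]
                refine Finset.sum_congr rfl fun k hk => ?_
                rw [← CT_mul, pow_add]
                ring
    _ = Th m * (1 + (X:S)^(4*m+2) + (CT 1 + CT (-1)) * (X:S)^(2*m+1)) := by ring

/-- The finite product identity. -/
lemma claim (m : ℕ) :
    (∏ j ∈ Finset.Icc 1 m, ((1 + CT 1 * (X:S)^(2*j-1)) * (1 + CT (-1) * (X:S)^(2*j-1))))
      = Th m := by
  induction m with
  | zero =>
    rw [Th]
    norm_num
    rw [Gz_of_nonneg le_rfl]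
    rfl
  | succ m ih =>
    rw [Finset.prod_Icc_succ_top (by omega), ih, Th_succ,
      show 2*(m+1)-1 = 2*m+1 from by omega]
    have hCT : CT 1 * CT (-1) = 1 := by
      rw [CT_mul, show (1:ℤ) + -1 = 0 from by ring, CT_zero]
    have hXX : (X:S)^(2*m+1) * (X:S)^(2*m+1) = (X:S)^(4*m+2) := by
      rw [← pow_add, show 2*m+1+(2*m+1) = 4*m+2 from by ring]
    linear_combination Th m * ((X:S)^(2*m+1) * (X:S)^(2*m+1)) * hCT + Th m * hXX


lemma lowcoeff (d i : ℕ) (hi : i ≤ d) (t : Finset ℕ) :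
    (∀ j ∈ t, d < 2*j) →
    PowerSeries.coeff (R := LaurentPolynomial ℤ) i (∏ j ∈ t, (1 - q j))
      = if i = 0 then 1 else 0 := by
  induction t using Finset.induction_on with
  | empty => intro _; simp [PowerSeries.coeff_one]
  | @insert a s ha ih =>
    intro ht
    rw [Finset.prod_insert ha, one_sub_mul, map_sub, q,
      PowerSeries.coeff_X_pow_mul', if_neg (by have := ht a (Finset.mem_insert_self a s); omega),
      sub_zero, ih (fun j hj => ht j (Finset.mem_insert_of_mem hj))]

lemma Hcoeff (N : ℕ) (n : ℤ) (hn2 : n.natAbs^2 ≤ N) :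
    PowerSeries.coeff (R := LaurentPolynomial ℤ) (N - n.natAbs^2) (Gz (2*N) ((N:ℤ)+n) * D N)
      = if N - n.natAbs^2 = 0 then 1 else 0 := by
  have hs : n.natAbs ≤ N := le_trans (Nat.le_self_pow two_ne_zero _) hn2
  have h2s : 2*n.natAbs ≤ n.natAbs^2 + 1 := by
    zify
    nlinarith [sq_nonneg ((n.natAbs : ℤ) - 1)]
  have hGz : Gz (2*N) ((N:ℤ)+n) = G (2*N) (N - n.natAbs) := by
    rcases le_or_gt 0 n with h | h
    · rw [Gz_of_nonneg (by omega), show ((N:ℤ)+n).toNat = N + n.natAbs from by omega,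
        G_symm (show N + n.natAbs ≤ 2*N from by omega),
        show 2*N - (N + n.natAbs) = N - n.natAbs from by omega]
    · rw [Gz_of_nonneg (by omega), show ((N:ℤ)+n).toNat = N - n.natAbs from by omega]
  have hD : D N = D (N - n.natAbs) * ∏ j ∈ Finset.Ioc (N - n.natAbs) N, (1 - q j) := by
    rw [D, D, Finset.prod_Ioc_consecutive _ (Nat.zero_le _) (Nat.sub_le _ _)]
  rw [hGz, hD, ← mul_assoc, star (show N - n.natAbs ≤ 2*N from by omega), E,
    show 2*N - (N - n.natAbs) = N + n.natAbs from by omega]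
  rw [← Finset.prod_union (Finset.disjoint_left.mpr fun x hx1 hx2 => by
    rw [Finset.mem_Ioc] at hx1 hx2
    omega)]
  apply lowcoeff _ _ le_rfl
  intro j hj
  rw [Finset.mem_union, Finset.mem_Ioc, Finset.mem_Ioc] at hj
  omega

end JTP

open JTP

/-- **Jacobi triple product identity.**  After the substitution `q = u²`, it reads
`∑_{n∈ℤ} t^n u^{n²} = ∏_{n≥1} (1-u^{2n})(1+t u^{2n-1})(1+t⁻¹ u^{2n-1})` in the ring of
formal power series in `u` with coefficients in `ℤ[t,t⁻¹]`.  Since the factors with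
`n > N` do not contribute to the coefficient of `u^N`, the identity is equivalent to the
following coefficientwise statement, where `T n` denotes `tⁿ` (so `T 1 = t`,
`T (-1) = t⁻¹`). -/
theorem jacobi_triple_product (N : ℕ) :
    (PowerSeries.coeff (R := LaurentPolynomial ℤ) N)
      (PowerSeries.mk fun m =>
        ∑ n ∈ Finset.Icc (-(m : ℤ)) (m : ℤ), if n ^ 2 = (m : ℤ) then T n else 0) =
    (PowerSeries.coeff (R := LaurentPolynomial ℤ) N)
      (∏ n ∈ Finset.Icc 1 N,
        ((1 - (PowerSeries.X : PowerSeries (LaurentPolynomial ℤ)) ^ (2 * n)) *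
          (1 + PowerSeries.C (R := LaurentPolynomial ℤ) (T 1) * PowerSeries.X ^ (2 * n - 1)) *
          (1 + PowerSeries.C (R := LaurentPolynomial ℤ) (T (-1)) * PowerSeries.X ^ (2 * n - 1)))) := by
  have hIcc : Finset.Icc 1 N = Finset.Ioc 0 N := by
    ext x
    simp only [Finset.mem_Icc, Finset.mem_Ioc]
    omega
  have hrw : (∏ n ∈ Finset.Icc 1 N,
        ((1 - (PowerSeries.X : PowerSeries (LaurentPolynomial ℤ)) ^ (2 * n)) *
          (1 + PowerSeries.C (R := LaurentPolynomial ℤ) (T 1) * PowerSeries.X ^ (2 * n - 1)) *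
          (1 + PowerSeries.C (R := LaurentPolynomial ℤ) (T (-1)) * PowerSeries.X ^ (2 * n - 1))))
      = D N * Th N := by
    rw [← claim N, D, ← hIcc, ← Finset.prod_mul_distrib]
    refine Finset.prod_congr rfl fun j hj => ?_
    simp only [q, CT]
    ring
  rw [PowerSeries.coeff_mk, hrw, Th, Finset.mul_sum, map_sum]
  refine Finset.sum_congr rfl fun n hn => ?_
  rw [Finset.mem_Icc] at hn
  have hterm : D N * (CT n * (Gz (2*N) ((N:ℤ)+n) * (X:S) ^ (n.natAbs^2)))
      = PowerSeries.C (R := LaurentPolynomial ℤ) (T n)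
          * ((Gz (2*N) ((N:ℤ)+n) * D N) * (X:S) ^ (n.natAbs^2)) := by
    rw [CT]
    ring
  rw [hterm, PowerSeries.coeff_C_mul, PowerSeries.coeff_mul_X_pow']
  have h1 : ((n.natAbs^2 : ℕ) : ℤ) = n^2 := by rw [Nat.cast_pow, Int.natAbs_sq]
  by_cases he : n.natAbs^2 ≤ N
  · rw [if_pos he, Hcoeff N n he]
    by_cases hsq : n^2 = (N:ℤ)
    · rw [if_pos hsq, if_pos (by omega), mul_one]
    · rw [if_neg hsq, if_neg (by omega), mul_zero]
  · rw [if_neg he, mul_zero, if_neg (by omega)]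
end

section
/- For any partition ν with |ν| < m and any hook partition γ = (p,1^q), one has ∑_{j=0}^{m−1} (−1)^j N^{(m−j,1^j)}_{ν,γ} = (−1)^q · δ_{ν,∅} · δ_{|γ|,m}, where N denotes the Littlewood–Richardson coefficient. -/
open MvPolynomial

/-- A model of the ring `Λ` of symmetric functions over `ℚ`: the polynomial ring
`ℚ[h₁, h₂, …]` on the complete homogeneous symmetric functions, where the variable
`X n` represents `h_{n+1}`. -/
abbrev Lam : Type := MvPolynomial ℕ ℚ

/-- The complete homogeneous symmetric function `h_k ∈ Λ`, with the conventions
`h_0 = 1` and `h_k = 0` for `k < 0`. -/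
noncomputable def hGen (k : ℤ) : Lam :=
  if k < 0 then 0 else if k = 0 then 1 else MvPolynomial.X (k.toNat - 1)

/-- The Schur function `s_λ ∈ Λ` of a partition `λ` (written as a list of parts), defined by
the Jacobi–Trudi formula `s_λ = det (h_{λ_i - i + j})_{1 ≤ i,j ≤ ℓ(λ)}`. -/
noncomputable def schur (l : List ℕ) : Lam :=
  Matrix.det (Matrix.of fun i j : Fin l.length =>
    hGen ((l.get i : ℤ) - (i : ℕ) + (j : ℕ)))

/-- A partition, written as a weakly decreasing list of positive integers. -/
def IsPartitionList (l : List ℕ) : Prop :=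
  l.Pairwise (· ≥ ·) ∧ ∀ x ∈ l, 0 < x

/-- The hook partition `(p, 1^q)`. -/
def hookList (p q : ℕ) : List ℕ := p :: List.replicate q 1

open TrivSqZeroExt

noncomputable def phi (m : ℕ) : Lam →ₐ[ℚ] DualNumber ℚ :=
  MvPolynomial.aeval (fun n => if n + 1 = m then ((m : ℚ)⁻¹ • DualNumber.eps) else 0)

lemma fst_phi_hGen (m : ℕ) (hm : 1 ≤ m) (k : ℤ) :
    (phi m (hGen k)).fst = if k = 0 then 1 else 0 := by
  unfold hGen
  by_cases h1 : k < 0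
  · rw [if_pos h1, if_neg (by omega : ¬ k = 0), map_zero, fst_zero]
  · rw [if_neg h1]
    by_cases h2 : k = 0
    · rw [if_pos h2, if_pos h2, map_one, fst_one]
    · rw [if_neg h2, if_neg h2]
      simp only [phi]
      rw [aeval_X]
      by_cases h3 : k.toNat - 1 + 1 = m
      · rw [if_pos h3, fst_smul, DualNumber.fst_eps, smul_zero]
      · rw [if_neg h3, fst_zero]

lemma snd_phi_hGen (m : ℕ) (hm : 1 ≤ m) (k : ℤ) :
    (phi m (hGen k)).snd = if k = m then (m : ℚ)⁻¹ else 0 := by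
  unfold hGen
  by_cases h1 : k < 0
  · rw [if_pos h1, if_neg (by omega : ¬ k = (m : ℤ)), map_zero, snd_zero]
  · rw [if_neg h1]
    by_cases h2 : k = 0
    · rw [if_pos h2, if_neg (by omega : ¬ k = (m : ℤ)), map_one, snd_one]
    · rw [if_neg h2]
      simp only [phi]
      rw [aeval_X]
      by_cases h3 : k = (m : ℤ)
      · rw [if_pos (by omega : k.toNat - 1 + 1 = m), if_pos h3, snd_smul,
          DualNumber.snd_eps, smul_eq_mul, mul_one]
      · rw [if_neg (by omega : ¬ k.toNat - 1 + 1 = m), if_neg h3, snd_zero]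

def cfun (m : ℕ) : List ℕ → ℚ
  | [] => 0
  | a :: t => if 1 ≤ a ∧ a ≤ m ∧ t = List.replicate (m - a) 1 then (-1) ^ (m - a) / m else 0

lemma dual_fst_prod {ι : Type*} (s : Finset ι) (f : ι → DualNumber ℚ) :
    (∏ i ∈ s, f i).fst = ∏ i ∈ s, (f i).fst :=
  map_prod (fstHom ℚ ℚ ℚ) _ _

lemma dual_snd_prod {ι : Type*} [DecidableEq ι] (s : Finset ι) (f : ι → DualNumber ℚ) :
    (∏ i ∈ s, f i).snd = ∑ i ∈ s, (f i).snd * ∏ j ∈ s.erase i, (f j).fst := by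
  induction s using Finset.induction with
  | empty => simp
  | insert _ _ ha ih =>
    rename_i a s
    rw [Finset.prod_insert ha, snd_mul, Finset.sum_insert ha, Finset.erase_insert ha,
      ih, dual_fst_prod]
    have hterm : ∀ i ∈ s, snd (f i) * ∏ j ∈ (insert a s).erase i, fst (f j)
        = fst (f a) * (snd (f i) * ∏ j ∈ s.erase i, fst (f j)) := by
      intro i hi
      rw [Finset.erase_insert_of_ne (by rintro rfl; exact ha hi),
        Finset.prod_insert (fun h => ha (Finset.mem_of_mem_erase h))]
      ring
    rw [Finset.sum_congr rfl hterm, ← Finset.mul_sum]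
    simp only [op_smul_eq_smul, smul_eq_mul]
    ring

lemma perm_rotate {n : ℕ} (σ : Equiv.Perm (Fin (n + 1))) (k : Fin (n + 1))
    (h : ∀ i, i ≠ k → (i : ℕ) + 1 ≤ (σ i : ℕ)) :
    k = Fin.last n ∧ σ = finRotate (n + 1) := by
  have hk : k = Fin.last n := by
    by_contra hk
    have h1 := h (Fin.last n) (fun e => hk e.symm)
    have h2 := (σ (Fin.last n)).isLt
    simp [Fin.last] at h1
    omega
  subst hk
  have key : ∀ i : Fin (n + 1), i ≠ Fin.last n → (σ i : ℕ) = (i : ℕ) + 1 := by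
    intro i hi
    have hin : (i : ℕ) < n := Fin.val_lt_last hi
    set c : Fin (n + 1) := ⟨(i : ℕ) + 1, by omega⟩ with hc
    have hAB : (Finset.Ioo i (Fin.last n)).image σ ⊆ Finset.Ioi c := by
      intro x hx
      obtain ⟨j, hj, rfl⟩ := Finset.mem_image.1 hx
      rw [Finset.mem_Ioo] at hj
      have hj2 : j ≠ Fin.last n := ne_of_lt hj.2
      have := h j hj2
      rw [Finset.mem_Ioi, Fin.lt_def]
      have : (i : ℕ) < (j : ℕ) := hj.1
      simp only [hc]
      omega
    have hcard : (Finset.Ioi c).card ≤ ((Finset.Ioo i (Fin.last n)).image σ).card := by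
      rw [Finset.card_image_of_injective _ σ.injective, Fin.card_Ioo, Fin.card_Ioi]
      simp [Fin.last, hc]
      omega
    have hBA := Finset.eq_of_subset_of_card_le hAB hcard
    have h1 := h i hi
    by_contra hne
    have hmem : σ i ∈ Finset.Ioi c := by
      rw [Finset.mem_Ioi, Fin.lt_def]
      simp only [hc]
      omega
    rw [← hBA] at hmem
    obtain ⟨j, hjA, hj⟩ := Finset.mem_image.1 hmem
    have hji : j = i := σ.injective hj
    subst hji
    rw [Finset.mem_Ioo] at hjA
    exact lt_irrefl _ hjA.1
  refine ⟨rfl, ?_⟩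
  have hlast : σ (Fin.last n) = 0 := by
    obtain ⟨j, hj⟩ := σ.surjective 0
    by_cases hjl : j = Fin.last n
    · rw [← hjl, hj]
    · have := h j hjl
      rw [hj] at this
      simp at this
  ext i
  rw [finRotate_succ_apply]
  by_cases hi : i = Fin.last n
  · subst hi
    rw [hlast]
    simp [Fin.last_add_one]
  · have h3 := key i hi
    have h4 : ((i + 1 : Fin (n + 1)) : ℕ) = (i : ℕ) + 1 := by
      rw [Fin.val_add_one]
      simp [hi]
    omega

lemma term_struct {m n : ℕ} (g : Fin (n + 1) → ℕ) (hpos : ∀ i, 1 ≤ g i)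
    (σ : Equiv.Perm (Fin (n + 1))) (k : Fin (n + 1))
    (h2 : ∀ i, i ≠ k → (g (σ i) : ℤ) - (σ i : ℕ) + (i : ℕ) = 0)
    (h1 : (g (σ k) : ℤ) - (σ k : ℕ) + (k : ℕ) = m) :
    k = Fin.last n ∧ σ = finRotate (n + 1) ∧ (∀ i : Fin (n + 1), i ≠ 0 → g i = 1) ∧
      (g 0 : ℤ) = (m : ℤ) - n := by
  have hup : ∀ i, i ≠ k → (i : ℕ) + 1 ≤ (σ i : ℕ) := by
    intro i hi
    have := h2 i hi
    have := hpos (σ i)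
    omega
  obtain ⟨hk, hσ⟩ := perm_rotate σ k hup
  subst hk
  have hlast0 : σ (Fin.last n) = 0 := by
    rw [hσ, finRotate_succ_apply, Fin.last_add_one]
  refine ⟨rfl, hσ, ?_, ?_⟩
  · intro i hi
    set j : Fin (n + 1) := ⟨(i : ℕ) - 1, by omega⟩ with hj
    have hival : 1 ≤ (i : ℕ) := by
      rcases Nat.eq_zero_or_pos (i : ℕ) with h | h
      · exact absurd (Fin.ext h) hi
      · omega
    have hjlast : j ≠ Fin.last n := by
      rw [hj, Ne, Fin.ext_iff]
      simp only [Fin.val_last]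
      have := i.isLt
      omega
    have hσj : σ j = i := by
      rw [hσ, finRotate_succ_apply]
      rw [Fin.ext_iff, Fin.val_add_one]
      rw [if_neg hjlast]
      simp only [hj]
      omega
    have := h2 j hjlast
    rw [hσj] at this
    simp only [hj] at this
    omega
  · have := h1
    rw [hlast0] at this
    simp only [Fin.val_zero, Fin.val_last] at this
    omega

lemma phi_schur_expand (m : ℕ) (l : List ℕ) :
    phi m (schur l) = ∑ σ : Equiv.Perm (Fin l.length),
      (Equiv.Perm.sign σ : ℤ) • ∏ i : Fin l.length,
        phi m (hGen ((l.get (σ i) : ℤ) - ((σ i : Fin l.length) : ℕ) + (i : ℕ))) := by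
  rw [schur, Matrix.det_apply, map_sum]
  refine Finset.sum_congr rfl fun σ _ => ?_
  rw [Units.smul_def, map_zsmul, map_prod]
  rfl

lemma fst_sum_eval (m n : ℕ) (g : Fin (n + 1) → ℕ) (hpos : ∀ i, 0 < g i)
    (σ : Equiv.Perm (Fin (n + 1))) :
    ∏ i : Fin (n + 1), (if (g (σ i) : ℤ) - ((σ i : Fin (n + 1)) : ℕ) + (i : ℕ) = 0
      then (1 : ℚ) else 0) = 0 := by
  apply Finset.prod_eq_zero (Finset.mem_univ (Fin.last n))
  rw [if_neg]
  have h1 := hpos (σ (Fin.last n))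
  have h2 := (σ (Fin.last n)).isLt
  simp only [Fin.val_last]
  omega

lemma fst_phi_schur (m : ℕ) (hm : 1 ≤ m) (l : List ℕ) (hl : IsPartitionList l) :
    (phi m (schur l)).fst = if l = [] then 1 else 0 := by
  match l with
  | [] =>
    rw [if_pos rfl]
    haveI : IsEmpty (Fin ([] : List ℕ).length) := inferInstanceAs (IsEmpty (Fin 0))
    have h0 : schur [] = 1 := Matrix.det_isEmpty
    rw [h0, map_one, fst_one]
  | a :: t =>
    rw [if_neg (by simp)]
    rw [phi_schur_expand, fst_sum]
    apply Finset.sum_eq_zero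
    intro σ _
    rw [fst_smul, dual_fst_prod]
    simp only [fst_phi_hGen m hm]
    have hz := fst_sum_eval m t.length (fun i => (a :: t).get i)
      (fun i => hl.2 _ (List.get_mem _ _)) σ
    have hz' : (∏ x : Fin (a :: t).length,
        if ((a :: t).get (σ x) : ℤ) - ((σ x : Fin (a :: t).length) : ℕ) + (x : ℕ) = 0
        then (1 : ℚ) else 0) = 0 := hz
    rw [hz', smul_zero]
lemma snd_sum_eval (m n : ℕ) (g : Fin (n + 1) → ℕ) (hpos : ∀ i, 0 < g i) :
    ∑ σ : Equiv.Perm (Fin (n + 1)), (Equiv.Perm.sign σ : ℤ) •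
      ∑ k : Fin (n + 1),
        (if (g (σ k) : ℤ) - ((σ k : Fin (n + 1)) : ℕ) + (k : ℕ) = m then (m : ℚ)⁻¹ else 0) *
        ∏ i ∈ Finset.univ.erase k,
          (if (g (σ i) : ℤ) - ((σ i : Fin (n + 1)) : ℕ) + (i : ℕ) = 0 then (1 : ℚ) else 0)
    = if (∀ i : Fin (n + 1), i ≠ 0 → g i = 1) ∧ (g 0 : ℤ) = (m : ℤ) - n
      then ((-1 : ℚ) ^ n / (m : ℚ)) else 0 := by
  classical
  have hterm : ∀ (σ : Equiv.Perm (Fin (n + 1))) (k : Fin (n + 1)),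
      ((if (g (σ k) : ℤ) - ((σ k : Fin (n + 1)) : ℕ) + (k : ℕ) = m then (m : ℚ)⁻¹ else 0) *
        ∏ i ∈ Finset.univ.erase k,
          (if (g (σ i) : ℤ) - ((σ i : Fin (n + 1)) : ℕ) + (i : ℕ) = 0 then (1 : ℚ) else 0)) ≠ 0 →
      k = Fin.last n ∧ σ = finRotate (n + 1) ∧
        (∀ i : Fin (n + 1), i ≠ 0 → g i = 1) ∧ (g 0 : ℤ) = (m : ℤ) - n := by
    intro σ k hne
    rcases mul_ne_zero_iff.1 hne with ⟨hB, hA⟩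
    have h1 : (g (σ k) : ℤ) - ((σ k : Fin (n + 1)) : ℕ) + (k : ℕ) = m := by
      by_contra h
      rw [if_neg h] at hB
      exact hB rfl
    have h2 : ∀ i, i ≠ k → (g (σ i) : ℤ) - ((σ i : Fin (n + 1)) : ℕ) + (i : ℕ) = 0 := by
      intro i hi
      have hmem := Finset.prod_ne_zero_iff.1 hA i (Finset.mem_erase.2 ⟨hi, Finset.mem_univ i⟩)
      by_contra h
      rw [if_neg h] at hmem
      exact hmem rfl
    exact term_struct g (fun i => Nat.one_le_iff_ne_zero.2 (Nat.pos_iff_ne_zero.1 (hpos i))) σ k h2 h1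
  by_cases H : (∀ i : Fin (n + 1), i ≠ 0 → g i = 1) ∧ (g 0 : ℤ) = (m : ℤ) - n
  · rw [if_pos H]
    rw [Finset.sum_eq_single_of_mem (finRotate (n + 1)) (Finset.mem_univ _) ?_]
    · rw [Finset.sum_eq_single_of_mem (Fin.last n) (Finset.mem_univ _) ?_]
      · have hrot0 : finRotate (n + 1) (Fin.last n) = 0 := by
          rw [finRotate_succ_apply, Fin.last_add_one]
        rw [hrot0]
        rw [if_pos (by simp only [Fin.val_zero, Fin.val_last]; omega)]
        have hprod : (∏ i ∈ Finset.univ.erase (Fin.last n),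
            (if (g (finRotate (n + 1) i) : ℤ) - ((finRotate (n + 1) i : Fin (n + 1)) : ℕ) + (i : ℕ) = 0
              then (1 : ℚ) else 0)) = 1 := by
          apply Finset.prod_eq_one
          intro i hi
          have hi' : i ≠ Fin.last n := (Finset.mem_erase.1 hi).1
          rw [finRotate_succ_apply]
          have hv : ((i + 1 : Fin (n + 1)) : ℕ) = (i : ℕ) + 1 := by
            rw [Fin.val_add_one, if_neg hi']
          have hne0 : (i + 1 : Fin (n + 1)) ≠ 0 := by
            intro h
            rw [h] at hv
            simp at hv
          rw [if_pos]
          rw [H.1 _ hne0, hv]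
          push_cast
          ring
        rw [hprod, mul_one, sign_finRotate]
        push_cast
        simp [zsmul_eq_mul, div_eq_mul_inv]
      · intro k _ hk
        by_contra h
        exact hk (hterm _ _ h).1
    · intro σ _ hσ
      rw [Finset.sum_eq_zero, smul_zero]
      intro k _
      by_contra h
      exact hσ (hterm _ _ h).2.1
  · rw [if_neg H]
    apply Finset.sum_eq_zero
    intro σ _
    rw [Finset.sum_eq_zero, smul_zero]
    intro k _
    by_contra h
    exact H ⟨(hterm _ _ h).2.2.1, (hterm _ _ h).2.2.2⟩

lemma snd_phi_schur (m : ℕ) (hm : 1 ≤ m) (l : List ℕ) (hl : IsPartitionList l) :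
    (phi m (schur l)).snd = cfun m l := by
  match l with
  | [] =>
    haveI : IsEmpty (Fin ([] : List ℕ).length) := inferInstanceAs (IsEmpty (Fin 0))
    have h0 : schur [] = 1 := Matrix.det_isEmpty
    rw [h0, map_one, snd_one]
    rfl
  | a :: t =>
    have ha : 0 < a := hl.2 a List.mem_cons_self
    rw [phi_schur_expand, snd_sum]
    simp only [snd_smul, dual_snd_prod, snd_phi_hGen m hm, fst_phi_hGen m hm]
    have hz := snd_sum_eval m t.length (fun i => (a :: t).get i)
      (fun i => hl.2 _ (List.get_mem _ _))
    have hz' : (∑ σ : Equiv.Perm (Fin (a :: t).length), (Equiv.Perm.sign σ : ℤ) •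
        ∑ k : Fin (a :: t).length,
          (if ((a :: t).get (σ k) : ℤ) - ((σ k : Fin (a :: t).length) : ℕ) + (k : ℕ) = m
            then (m : ℚ)⁻¹ else 0) *
          ∏ i ∈ Finset.univ.erase k,
            (if ((a :: t).get (σ i) : ℤ) - ((σ i : Fin (a :: t).length) : ℕ) + (i : ℕ) = 0
              then (1 : ℚ) else 0))
        = if (∀ i : Fin (t.length + 1), i ≠ 0 → (a :: t).get i = 1) ∧
            ((a :: t).get (0 : Fin (t.length + 1)) : ℤ) = (m : ℤ) - t.length
          then ((-1 : ℚ) ^ t.length / (m : ℚ)) else 0 := hz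
    rw [hz']
    show _ = cfun m (a :: t)
    rw [cfun]
    by_cases H : (∀ i : Fin (t.length + 1), i ≠ 0 → (a :: t).get i = 1) ∧
        ((a :: t).get (0 : Fin (t.length + 1)) : ℤ) = (m : ℤ) - t.length
    · rw [if_pos H]
      have hg0 : ((a : ℤ)) = (m : ℤ) - t.length := H.2
      have hlen : t.length = m - a := by omega
      have ham : a ≤ m := by omega
      have hrep : t = List.replicate (m - a) 1 := by
        apply List.eq_replicate_iff.2
        refine ⟨by omega, ?_⟩
        intro b hb
        obtain ⟨i, hi⟩ := List.mem_iff_get.1 hb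
        have := H.1 i.succ (Fin.succ_ne_zero i)
        rw [← hi]
        exact this
      rw [if_pos ⟨ha, ham, hrep⟩, ← hlen]
    · rw [if_neg H]
      rw [if_neg]
      rintro ⟨h1, h2, h3⟩
      apply H
      constructor
      · intro i hi
        obtain ⟨j, hj⟩ := Fin.exists_succ_eq_of_ne_zero hi
        rw [← hj]
        show t.get j = 1
        exact (List.eq_replicate_iff.1 h3).2 _ (List.get_mem t _)
      · show (a : ℤ) = (m : ℤ) - t.length
        have : t.length = m - a := by rw [h3, List.length_replicate]
        omega

lemma hook_partition (p q : ℕ) (hp : 1 ≤ p) : IsPartitionList (hookList p q) := by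
  constructor
  · rw [hookList, List.pairwise_cons]
    constructor
    · intro b hb
      rw [List.eq_of_mem_replicate hb]
      exact hp
    · exact List.pairwise_replicate.2 (Or.inr (le_refl 1))
  · intro x hx
    rcases List.mem_cons.1 hx with h | h
    · omega
    · rw [List.eq_of_mem_replicate h]
      omega

lemma cfun_hook (m p q : ℕ) (hp : 1 ≤ p) (hm : 1 ≤ m) :
    cfun m (hookList p q) = if p + q = m then ((-1 : ℚ) ^ q / m) else 0 := by
  rw [hookList, cfun]
  by_cases h : p + q = m
  · rw [if_pos h, if_pos ⟨hp, by omega, by rw [show m - p = q by omega]⟩,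
      show m - p = q by omega]
  · rw [if_neg h, if_neg]
    rintro ⟨h1, h2, h3⟩
    have := congrArg List.length h3
    simp only [List.length_replicate] at this
    omega

lemma cfun_ne_zero (m : ℕ) (l : List ℕ) (h : cfun m l ≠ 0) :
    ∃ j ∈ Finset.range m, l = hookList (m - j) j := by
  match l with
  | [] => exact absurd rfl h
  | a :: t =>
    rw [cfun] at h
    by_cases hc : 1 ≤ a ∧ a ≤ m ∧ t = List.replicate (m - a) 1
    · refine ⟨m - a, Finset.mem_range.2 (by omega), ?_⟩
      rw [hookList, show m - (m - a) = a by omega, ← hc.2.2]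
    · rw [if_neg hc] at h
      exact absurd rfl h

/-- For any partition `ν` with `|ν| < m` and any hook partition `γ = (p,1^q)`, one has
`∑_{j=0}^{m-1} (-1)^j N^{(m-j,1^j)}_{ν,γ} = (-1)^q · δ_{ν,∅} · δ_{|γ|,m}`, where `N` denotes
the Littlewood–Richardson coefficient, i.e. the structure constants of the Schur functions:
`s_ν · s_γ = ∑_λ N^λ_{ν,γ} s_λ`. -/
theorem alternating_sum_hook_lr_coefficients (m p q : ℕ) (hp : 1 ≤ p)
    (ν : List ℕ) (hν : IsPartitionList ν) (hsize : ν.sum < m)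
    (N : List ℕ →₀ ℕ) (hsupp : ∀ l ∈ N.support, IsPartitionList l)
    (hexp : schur ν * schur (hookList p q) = N.sum fun l k => (k : Lam) • schur l) :
    ∑ j ∈ Finset.range m, (-1 : ℤ) ^ j * (N (hookList (m - j) j) : ℤ) =
      (-1 : ℤ) ^ q * (if ν = [] then 1 else 0) * (if p + q = m then 1 else 0) := by
  classical
  have hm : 1 ≤ m := by omega
  have hγ := hook_partition p q hp
  -- apply phi and take snd
  have key := congrArg (fun x => (phi m x).snd) hexp
  simp only [map_mul, snd_mul] at key
  rw [fst_phi_schur m hm ν hν, snd_phi_schur m hm _ hγ, fst_phi_schur m hm _ hγ,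
    snd_phi_schur m hm ν hν] at key
  rw [show (if hookList p q = [] then (1 : ℚ) else 0) = 0 from if_neg (by simp [hookList])] at key
  rw [Finsupp.sum] at key
  rw [map_sum, snd_sum] at key
  have hterm : ∀ l ∈ N.support,
      (phi m ((N l : Lam) • schur l)).snd = (N l : ℚ) * cfun m l := by
    intro l hl
    rw [smul_eq_mul, map_mul, map_natCast]
    rw [snd_mul]
    simp only [fst_natCast, snd_natCast, op_smul_eq_smul, smul_eq_mul, zero_mul, mul_zero, add_zero,
      snd_phi_schur m hm l (hsupp l hl)]
  rw [Finset.sum_congr rfl hterm] at key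
  -- key : (if ν = [] then 1 else 0) •> cfun m γ + cfun m ν <• 0 = ∑ l ∈ supp, N l * cfun m l
  simp only [op_smul_eq_smul, smul_eq_mul, mul_zero, zero_mul, add_zero] at key
  rw [cfun_hook m p q hp hm] at key
  -- convert support sum to range sum
  set T : Finset (List ℕ) := (Finset.range m).image (fun j => hookList (m - j) j) with hT
  have hinj : ∀ j₁ ∈ Finset.range m, ∀ j₂ ∈ Finset.range m,
      hookList (m - j₁) j₁ = hookList (m - j₂) j₂ → j₁ = j₂ := by
    intro j₁ _ j₂ _ h
    have := congrArg List.length h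
    simp [hookList] at this
    exact this
  have hsum1 : ∑ l ∈ N.support, (N l : ℚ) * cfun m l
      = ∑ l ∈ N.support ∪ T, (N l : ℚ) * cfun m l := by
    apply Finset.sum_subset Finset.subset_union_left
    intro x _ hx
    rw [Finsupp.notMem_support_iff.1 hx]
    simp
  have hsum2 : ∑ l ∈ T, (N l : ℚ) * cfun m l
      = ∑ l ∈ N.support ∪ T, (N l : ℚ) * cfun m l := by
    apply Finset.sum_subset Finset.subset_union_right
    intro x _ hx
    have hc : cfun m x = 0 := by
      by_contra h
      obtain ⟨j, hj, rfl⟩ := cfun_ne_zero m x h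
      exact hx (Finset.mem_image_of_mem _ hj)
    rw [hc, mul_zero]
  have hsum3 : ∑ l ∈ T, (N l : ℚ) * cfun m l
      = ∑ j ∈ Finset.range m, (N (hookList (m - j) j) : ℚ) * ((-1) ^ j / m) := by
    rw [hT, Finset.sum_image hinj]
    apply Finset.sum_congr rfl
    intro j hj
    rw [Finset.mem_range] at hj
    congr 1
    rw [hookList, cfun, if_pos ⟨by omega, by omega, by rw [show m - (m - j) = j by omega]⟩,
      show m - (m - j) = j by omega]
  rw [hsum1, ← hsum2, hsum3] at key
  -- final arithmetic
  have hm0 : (m : ℚ) ≠ 0 := Nat.cast_ne_zero.2 (by omega)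
  have QE : ∑ j ∈ Finset.range m, (-1 : ℚ) ^ j * (N (hookList (m - j) j) : ℚ) =
      (-1 : ℚ) ^ q * (if ν = [] then 1 else 0) * (if p + q = m then 1 else 0) := by
    have : ∑ j ∈ Finset.range m, (-1 : ℚ) ^ j * (N (hookList (m - j) j) : ℚ)
        = (m : ℚ) * ∑ j ∈ Finset.range m, (N (hookList (m - j) j) : ℚ) * ((-1) ^ j / m) := by
      rw [Finset.mul_sum]
      apply Finset.sum_congr rfl
      intro j _
      field_simp
    rw [this, ← key]
    split_ifs <;> field_simp <;> ring
  split_ifs at QE ⊢ <;> exact_mod_cast QE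
end

section
/- Define operators on the ring Λ of symmetric functions: h_n (multiplication by the n-th complete homogeneous symmetric function) and h*_n (its adjoint with respect to the Hall inner product, i.e. the skewing operator s_λ ↦ s_{λ/(n)}). Then for all m, n ≥ 1: h*_m ∘ h_n − h_n ∘ h*_m = h*_{m−1} ∘ h_{n−1}, where h_0 = h*_0 = identity. -/
open MvPolynomial PowerSeries

/-- The power sum `p_n ∈ Λ` (for `n ≥ 1`). -/
noncomputable def pVar (n : ℕ) : Lam := MvPolynomial.X (n - 1)

/-- The exponential of a formal power series with vanishing constant term. -/
noncomputable def psExp (F : PowerSeries Lam) : PowerSeries Lam :=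
  PowerSeries.mk fun N =>
    ∑ k ∈ Finset.range (N + 1), (k.factorial : ℚ)⁻¹ • PowerSeries.coeff N (F ^ k)

/-- The complete homogeneous symmetric function `h_n ∈ Λ`, defined via the generating
function `∑_{n≥0} h_n z^n = exp (∑_{n≥1} p_n z^n / n)`; in particular `h_0 = 1`. -/
noncomputable def hPoly (n : ℕ) : Lam :=
  PowerSeries.coeff n
    (psExp (PowerSeries.mk fun k => if k = 0 then 0 else (k : ℚ)⁻¹ • pVar k))

/-- The quantity `z_λ = ∏ᵢ i^{mᵢ(λ)} mᵢ(λ)!` attached to the monomial `p_λ = ∏ p_i^{mᵢ}`. -/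
noncomputable def zWeight (d : ℕ →₀ ℕ) : ℚ :=
  d.prod fun n k => ((n : ℚ) + 1) ^ k * (k.factorial : ℚ)

/-- The Hall inner product on `Λ`, for which `⟨p_λ, p_μ⟩ = z_λ δ_{λμ}` (equivalently, the
Schur functions form an orthonormal basis). -/
noncomputable def hallForm (f g : Lam) : ℚ :=
  ∑ d ∈ f.support, MvPolynomial.coeff d f * MvPolynomial.coeff d g * zWeight d

/-- Multiplication by `h_n` as a linear operator on `Λ`. -/
noncomputable def hMul (n : ℕ) : Module.End ℚ Lam := LinearMap.mulLeft ℚ (hPoly n)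


open Finset

set_option linter.unusedSectionVars false

noncomputable def psE {A : Type*} [CommRing A] [Algebra ℚ A] (F : PowerSeries A) : PowerSeries A :=
  PowerSeries.mk fun N =>
    ∑ k ∈ Finset.range (N + 1), (k.factorial : ℚ)⁻¹ • PowerSeries.coeff N (F ^ k)

section GenericExp

variable {A B : Type*} [CommRing A] [Algebra ℚ A] [CommRing B] [Algebra ℚ B]

theorem coeff_psE (F : PowerSeries A) (N : ℕ) :
    coeff N (psE F) = ∑ k ∈ range (N + 1), (k.factorial : ℚ)⁻¹ • coeff N (F ^ k) :=
  coeff_mk _ _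

theorem coeff_pow_eq_zero {F : PowerSeries A} (hF : constantCoeff F = 0) :
    ∀ {k N : ℕ}, N < k → coeff N (F ^ k) = 0 := by
  intro k
  induction k with
  | zero => intro N h; exact absurd h (Nat.not_lt_zero N)
  | succ k ih =>
    intro N h
    rw [pow_succ, PowerSeries.coeff_mul]
    refine Finset.sum_eq_zero fun p hp => ?_
    rw [Finset.HasAntidiagonal.mem_antidiagonal] at hp
    rcases lt_or_ge p.1 k with h1 | h1
    · rw [ih h1, zero_mul]
    · have h2 : p.2 = 0 := by omega
      rw [h2, coeff_zero_eq_constantCoeff, hF, mul_zero]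

theorem coeff_mul_pow_eq_zero {F G : PowerSeries A} (hF : constantCoeff F = 0)
    (hG : constantCoeff G = 0) {p q N : ℕ} (h : N < p + q) :
    coeff N (F ^ p * G ^ q) = 0 := by
  rw [PowerSeries.coeff_mul]
  refine Finset.sum_eq_zero fun x hx => ?_
  rw [Finset.HasAntidiagonal.mem_antidiagonal] at hx
  rcases lt_or_ge x.1 p with h1 | h1
  · rw [coeff_pow_eq_zero hF h1, zero_mul]
  · rw [coeff_pow_eq_zero hG (by omega), mul_zero]

theorem map_psE (φ : A →+* B) (F : PowerSeries A) :
    PowerSeries.map φ (psE F) = psE (PowerSeries.map φ F) := by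
  ext N
  rw [PowerSeries.coeff_map, coeff_psE, coeff_psE, map_sum]
  refine Finset.sum_congr rfl fun k _ => ?_
  rw [map_rat_smul, ← map_pow, PowerSeries.coeff_map]

theorem fact_inv_choose {j k : ℕ} (h : j ≤ k) :
    (k.factorial : ℚ)⁻¹ * (k.choose j : ℚ) = (j.factorial : ℚ)⁻¹ * ((k - j).factorial : ℚ)⁻¹ := by
  have key : ((k.choose j : ℚ)) * j.factorial * (k - j).factorial = k.factorial := by
    exact_mod_cast congrArg (Nat.cast : ℕ → ℚ) (Nat.choose_mul_factorial_mul_factorial h)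
  have h1 : (j.factorial : ℚ) ≠ 0 := by exact_mod_cast j.factorial_ne_zero
  have h2 : ((k - j).factorial : ℚ) ≠ 0 := by exact_mod_cast (k - j).factorial_ne_zero
  have h3 : (k.factorial : ℚ) ≠ 0 := by exact_mod_cast k.factorial_ne_zero
  field_simp
  linarith [key]

theorem tri_eq_square {M : Type*} [AddCommMonoid M] (N : ℕ) (g : ℕ → ℕ → M)
    (hg : ∀ p q, N < p + q → g p q = 0) :
    ∑ k ∈ range (N + 1), ∑ j ∈ range (k + 1), g j (k - j)
      = ∑ p ∈ range (N + 1), ∑ q ∈ range (N + 1), g p q := by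
  have L : ∑ k ∈ range (N + 1), ∑ j ∈ range (k + 1), g j (k - j)
      = ∑ k ∈ range (N + 1), ∑ ij ∈ Finset.HasAntidiagonal.antidiagonal k, g ij.1 ij.2 := by
    refine Finset.sum_congr rfl fun k _ => ?_
    rw [Finset.Nat.sum_antidiagonal_eq_sum_range_succ_mk]
  have R : ∑ p ∈ range (N+1), ∑ q ∈ range (N+1), g p q
      = ∑ p ∈ (range (N+1) ×ˢ range (N+1)).filter (fun p : ℕ × ℕ => p.1 + p.2 ≤ N), g p.1 p.2 := by
    rw [← Finset.sum_product']
    refine (Finset.sum_subset (Finset.filter_subset _ _) fun x hxs hx => ?_).symm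
    have hnp : ¬ (x.1 + x.2 ≤ N) := fun h => hx (Finset.mem_filter.mpr ⟨hxs, h⟩)
    exact hg x.1 x.2 (by omega)
  have L2 : ∑ k ∈ range (N + 1), ∑ ij ∈ Finset.HasAntidiagonal.antidiagonal k, g ij.1 ij.2
      = ∑ x ∈ (range (N + 1)).sigma (fun k => Finset.HasAntidiagonal.antidiagonal k), g x.2.1 x.2.2 :=
    (Finset.sum_sigma (range (N + 1)) (fun k => Finset.HasAntidiagonal.antidiagonal k) (fun x => g x.2.1 x.2.2)).symm
  rw [L, L2, R]
  refine Finset.sum_nbij' (fun x => (x.2.1, x.2.2)) (fun p => ⟨p.1 + p.2, (p.1, p.2)⟩)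
    ?_ ?_ ?_ ?_ ?_
  · intro x hx
    simp only [Finset.mem_sigma, Finset.mem_range, Finset.HasAntidiagonal.mem_antidiagonal] at hx
    simp only [Finset.mem_filter, Finset.mem_product, Finset.mem_range]
    omega
  · intro p hp
    simp only [Finset.mem_filter, Finset.mem_product, Finset.mem_range] at hp
    refine Finset.mem_sigma.mpr ⟨Finset.mem_range.mpr (show p.1 + p.2 < N + 1 by omega), Finset.HasAntidiagonal.mem_antidiagonal.mpr rfl⟩
  · rintro ⟨k, a, b⟩ hx
    dsimp only
    simp only [Finset.mem_sigma, Finset.mem_range, Finset.HasAntidiagonal.mem_antidiagonal] at hx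
    simp only [Sigma.mk.inj_iff, heq_eq_eq, and_true]
    omega
  · intro p _; rfl
  · intro x _; rfl

theorem psE_mul {F G : PowerSeries A} (hF : constantCoeff F = 0)
    (hG : constantCoeff G = 0) : psE (F + G) = psE F * psE G := by
  ext N
  set g : ℕ → ℕ → A := fun p q =>
    ((p.factorial : ℚ)⁻¹ * (q.factorial : ℚ)⁻¹) • coeff N (F ^ p * G ^ q) with hgdef
  have hg0 : ∀ p q, N < p + q → g p q = 0 := fun p q h => by
    rw [hgdef]; dsimp only; rw [coeff_mul_pow_eq_zero hF hG h, smul_zero]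
  have LHS : coeff N (psE (F + G))
      = ∑ k ∈ range (N + 1), ∑ j ∈ range (k + 1), g j (k - j) := by
    rw [coeff_psE]
    refine Finset.sum_congr rfl fun k _ => ?_
    rw [add_pow, map_sum, Finset.smul_sum]
    refine Finset.sum_congr rfl fun j hj => ?_
    rw [Finset.mem_range] at hj
    have hterm : coeff N (F ^ j * G ^ (k - j) * (k.choose j : PowerSeries A))
        = (k.choose j : ℚ) • coeff N (F ^ j * G ^ (k - j)) := by
      rw [mul_comm _ ((k.choose j : ℕ) : PowerSeries A), ← nsmul_eq_mul, map_nsmul,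
        ← Nat.cast_smul_eq_nsmul ℚ]
    rw [hterm, smul_smul, fact_inv_choose (Nat.lt_succ_iff.mp hj)]
  have RHS : coeff N (psE F * psE G)
      = ∑ p ∈ range (N + 1), ∑ q ∈ range (N + 1), g p q := by
    rw [PowerSeries.coeff_mul]
    have step1 : ∀ ij : ℕ × ℕ, ij ∈ Finset.HasAntidiagonal.antidiagonal N →
        coeff ij.1 (psE F) * coeff ij.2 (psE G)
          = ∑ p ∈ range (N+1), ∑ q ∈ range (N+1),
              ((p.factorial : ℚ)⁻¹ * (q.factorial : ℚ)⁻¹) •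
                (coeff ij.1 (F ^ p) * coeff ij.2 (G ^ q)) := by
      intro ij hij
      rw [Finset.HasAntidiagonal.mem_antidiagonal] at hij
      have e1 : coeff ij.1 (psE F)
          = ∑ p ∈ range (N+1), (p.factorial : ℚ)⁻¹ • coeff ij.1 (F ^ p) := by
        rw [coeff_psE]
        refine Finset.sum_subset (Finset.range_subset_range.2 (by omega)) fun p _ hp => ?_
        rw [Finset.mem_range] at hp
        rw [coeff_pow_eq_zero hF (by omega), smul_zero]
      have e2 : coeff ij.2 (psE G)
          = ∑ q ∈ range (N+1), (q.factorial : ℚ)⁻¹ • coeff ij.2 (G ^ q) := by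
        rw [coeff_psE]
        refine Finset.sum_subset (Finset.range_subset_range.2 (by omega)) fun q _ hq => ?_
        rw [Finset.mem_range] at hq
        rw [coeff_pow_eq_zero hG (by omega), smul_zero]
      rw [e1, e2, Finset.sum_mul_sum]
      refine Finset.sum_congr rfl fun p _ => Finset.sum_congr rfl fun q _ => ?_
      rw [smul_mul_assoc, mul_smul_comm, smul_smul]
    rw [Finset.sum_congr rfl step1, Finset.sum_comm]
    refine Finset.sum_congr rfl fun p _ => ?_
    rw [Finset.sum_comm]
    refine Finset.sum_congr rfl fun q _ => ?_
    rw [hgdef]; dsimp only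
    rw [PowerSeries.coeff_mul, ← Finset.smul_sum]
  rw [LHS, RHS, tri_eq_square N g hg0]


end GenericExp

theorem fact_succ_inv (k : ℕ) : (((k+1).factorial : ℚ))⁻¹ * ((k : ℚ) + 1) = (k.factorial : ℚ)⁻¹ := by
  rw [Nat.factorial_succ]
  have hk : ((k : ℚ) + 1) ≠ 0 := by positivity
  have hf : (k.factorial : ℚ) ≠ 0 := by exact_mod_cast k.factorial_ne_zero
  push_cast
  field_simp



noncomputable def Lq : PowerSeries ℚ := PowerSeries.mk fun j => if j = 0 then 0 else (j : ℚ)⁻¹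

theorem constantCoeff_Lq : constantCoeff Lq = 0 := by
  rw [← coeff_zero_eq_constantCoeff, Lq, coeff_mk]; simp

theorem coeff_succ_Lq_mul (H : PowerSeries ℚ) (b : ℕ) :
    coeff (b + 1) (Lq * H) = ∑ i ∈ range (b + 1), ((i : ℚ) + 1)⁻¹ * coeff (b - i) H := by
  rw [PowerSeries.coeff_mul, Finset.Nat.sum_antidiagonal_eq_sum_range_succ_mk, Finset.sum_range_succ']
  have h1 : ∀ i ∈ range (b + 1), coeff (i + 1) Lq * coeff (b + 1 - (i + 1)) H
      = ((i : ℚ) + 1)⁻¹ * coeff (b - i) H := by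
    intro i _
    rw [Lq, coeff_mk, if_neg (Nat.succ_ne_zero i), Nat.succ_sub_succ]
    push_cast; ring_nf
  rw [Finset.sum_congr rfl h1, Lq, coeff_mk, if_pos rfl, zero_mul, add_zero]

theorem tri_swap {M : Type*} [AddCommMonoid M] (b : ℕ) (f : ℕ → ℕ → M) :
    ∑ i ∈ range (b + 1), ∑ l ∈ range (b - i), f i l
      = ∑ j ∈ range (b + 1), ∑ i ∈ range j, f i (j - 1 - i) := by
  rw [show (∑ i ∈ range (b + 1), ∑ l ∈ range (b - i), f i l)
      = ∑ x ∈ (range (b + 1)).sigma (fun i => range (b - i)), f x.1 x.2 from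
    (Finset.sum_sigma (range (b + 1)) (fun i => range (b - i)) (fun x => f x.1 x.2)).symm]
  rw [show (∑ j ∈ range (b + 1), ∑ i ∈ range j, f i (j - 1 - i))
      = ∑ x ∈ (range (b + 1)).sigma (fun j => range j), f x.2 (x.1 - 1 - x.2) from
    (Finset.sum_sigma (range (b + 1)) (fun j => range j) (fun x => f x.2 (x.1 - 1 - x.2))).symm]
  refine Finset.sum_nbij' (fun x => ⟨x.1 + x.2 + 1, x.1⟩) (fun x => ⟨x.2, x.1 - 1 - x.2⟩)
    ?_ ?_ ?_ ?_ ?_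
  · rintro ⟨i, l⟩ hx
    dsimp only
    simp only [Finset.mem_sigma, Finset.mem_range] at hx ⊢
    omega
  · rintro ⟨j, i⟩ hx
    dsimp only
    simp only [Finset.mem_sigma, Finset.mem_range] at hx ⊢
    omega
  · rintro ⟨i, l⟩ hx
    dsimp only
    simp only [Finset.mem_sigma, Finset.mem_range] at hx
    simp only [Sigma.mk.inj_iff, heq_eq_eq]
    exact ⟨trivial, by omega⟩
  · rintro ⟨j, i⟩ hx
    dsimp only
    simp only [Finset.mem_sigma, Finset.mem_range] at hx
    simp only [Sigma.mk.inj_iff, heq_eq_eq]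
    exact ⟨by omega, trivial⟩
  · rintro ⟨i, l⟩ hx
    simp only [Finset.mem_sigma, Finset.mem_range] at hx
    dsimp only
    congr 1
    omega

theorem recq : ∀ (k b : ℕ), ((b : ℚ) + 1) * coeff (b + 1) (Lq ^ (k + 1))
    = ((k : ℚ) + 1) * ∑ j ∈ range (b + 1), coeff j (Lq ^ k) := by
  intro k
  induction k with
  | zero =>
    intro b
    have h1 : PowerSeries.coeff (b + 1) (Lq ^ 1) = ((b : ℚ) + 1)⁻¹ := by
      rw [pow_one, Lq, coeff_mk, if_neg (Nat.succ_ne_zero b)]; push_cast; ring_nf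
    have h2 : ∑ j ∈ range (b + 1), coeff j (Lq ^ 0) = 1 := by
      simp only [pow_zero, PowerSeries.coeff_one]
      rw [Finset.sum_ite_eq' (range (b + 1)) 0 (fun _ => (1 : ℚ))]
      simp
    rw [h1, h2, Nat.cast_zero, mul_inv_cancel₀ (by positivity)]
    norm_num
  | succ k ih =>
    intro b
    rw [pow_succ' Lq (k + 1), coeff_succ_Lq_mul, Finset.mul_sum]
    have key : ∀ i ∈ range (b + 1),
        ((b : ℚ) + 1) * (((i : ℚ) + 1)⁻¹ * coeff (b - i) (Lq ^ (k + 1)))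
        = coeff (b - i) (Lq ^ (k + 1))
          + ∑ l ∈ range (b - i), ((k : ℚ) + 1) * (((i : ℚ) + 1)⁻¹ * coeff l (Lq ^ k)) := by
      intro i hi
      rw [Finset.mem_range] at hi
      have hsum : ∑ l ∈ range (b - i), ((k : ℚ) + 1) * (((i : ℚ) + 1)⁻¹ * coeff l (Lq ^ k))
          = ((i : ℚ) + 1)⁻¹ * (((k : ℚ) + 1) * ∑ l ∈ range (b - i), coeff l (Lq ^ k)) := by
        rw [Finset.mul_sum, Finset.mul_sum]
        exact Finset.sum_congr rfl fun l _ => by ring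
      rw [hsum]
      rcases Nat.eq_zero_or_pos (b - i) with hj | hj
      · have hbe : b = i := by omega
        subst hbe
        rw [hj, range_zero, Finset.sum_empty, mul_zero, mul_zero, add_zero,
          ← mul_assoc, mul_inv_cancel₀ (by positivity), one_mul]
      · obtain ⟨j', hj'⟩ : ∃ j', b - i = j' + 1 := ⟨b - i - 1, by omega⟩
        rw [hj', ← ih j']
        have hb : (b : ℚ) + 1 = ((i : ℚ) + 1) + ((j' : ℚ) + 1) := by
          have hbe : b = i + j' + 1 := by omega
          rw [hbe]; push_cast; ring
        rw [hb]
        have hiq : ((i : ℚ) + 1) ≠ 0 := by positivity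
        field_simp
    rw [Finset.sum_congr rfl key, Finset.sum_add_distrib]
    have first : ∑ i ∈ range (b + 1), coeff (b - i) (Lq ^ (k + 1))
        = ∑ j ∈ range (b + 1), coeff j (Lq ^ (k + 1)) :=
      Finset.sum_range_reflect (fun j => coeff j (Lq ^ (k + 1))) (b + 1)
    have expand : ∀ j, coeff j (Lq ^ (k + 1))
        = ∑ i ∈ range j, ((i : ℚ) + 1)⁻¹ * coeff (j - 1 - i) (Lq ^ k) := by
      intro j
      cases j with
      | zero =>
        rw [range_zero, Finset.sum_empty, coeff_zero_eq_constantCoeff, map_pow,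
          constantCoeff_Lq, zero_pow (Nat.succ_ne_zero k)]
      | succ j =>
        rw [pow_succ' Lq k, coeff_succ_Lq_mul]
        exact Finset.sum_congr rfl fun i _ => by rw [Nat.succ_sub_one]
    rw [tri_swap b (fun i l => ((k : ℚ) + 1) * (((i : ℚ) + 1)⁻¹ * coeff l (Lq ^ k)))]
    have e2 : ∀ j ∈ range (b + 1),
        ∑ i ∈ range j, ((k : ℚ) + 1) * (((i : ℚ) + 1)⁻¹ * coeff (j - 1 - i) (Lq ^ k))
        = ((k : ℚ) + 1) * coeff j (Lq ^ (k + 1)) := by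
      intro j _
      rw [expand j, Finset.mul_sum]
    rw [Finset.sum_congr rfl e2, first, ← Finset.mul_sum]
    push_cast
    ring

theorem coeff_psE_Lq (b : ℕ) : coeff b (psE Lq) = 1 := by
  induction b using Nat.strong_induction_on with
  | _ b ih =>
    match b with
    | 0 => simp [coeff_psE]
    | b' + 1 =>
      have key : ((b' : ℚ) + 1) * coeff (b' + 1) (psE Lq)
          = ∑ j ∈ range (b' + 1), coeff j (psE Lq) := by
        simp only [coeff_psE, smul_eq_mul]
        rw [Finset.mul_sum, Finset.sum_range_succ']
        have h0 : ((b' : ℚ) + 1) * ((Nat.factorial 0 : ℚ)⁻¹ * PowerSeries.coeff (b' + 1) (Lq ^ 0)) = 0 := by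
          simp [PowerSeries.coeff_one]
        rw [h0, add_zero]
        have h1 : ∀ k ∈ range (b' + 1),
            ((b' : ℚ) + 1) * ((((k + 1).factorial : ℚ))⁻¹ * coeff (b' + 1) (Lq ^ (k + 1)))
            = ∑ j ∈ range (b' + 1), (k.factorial : ℚ)⁻¹ * coeff j (Lq ^ k) := by
          intro k _
          calc ((b' : ℚ) + 1) * ((((k + 1).factorial : ℚ))⁻¹ * coeff (b' + 1) (Lq ^ (k + 1)))
              = (((k + 1).factorial : ℚ))⁻¹ * (((b' : ℚ) + 1) * coeff (b' + 1) (Lq ^ (k + 1))) := by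
                ring
            _ = (((k + 1).factorial : ℚ))⁻¹ * (((k : ℚ) + 1) * ∑ j ∈ range (b' + 1), coeff j (Lq ^ k)) := by
                rw [recq k b']
            _ = ∑ j ∈ range (b' + 1), (k.factorial : ℚ)⁻¹ * coeff j (Lq ^ k) := by
                rw [Finset.mul_sum, Finset.mul_sum]
                refine Finset.sum_congr rfl fun j _ => ?_
                rw [Nat.factorial_succ]
                have hk : ((k : ℚ) + 1) ≠ 0 := by positivity
                have hf : (k.factorial : ℚ) ≠ 0 := by exact_mod_cast k.factorial_ne_zero
                push_cast
                field_simp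
        rw [Finset.sum_congr rfl h1, Finset.sum_comm]
        refine Finset.sum_congr rfl fun j hj => ?_
        rw [Finset.mem_range] at hj
        exact (Finset.sum_subset (Finset.range_subset_range.2 (show j + 1 ≤ b' + 1 by omega))
          fun k _ hk => by
            rw [Finset.mem_range] at hk
            rw [coeff_pow_eq_zero constantCoeff_Lq (by omega), mul_zero]).symm
      have sum1 : ∑ j ∈ range (b' + 1), coeff j (psE Lq) = (b' : ℚ) + 1 := by
        rw [Finset.sum_congr rfl (fun j hj => ih j (by rw [Finset.mem_range] at hj; omega))]
        rw [Finset.sum_const, Finset.card_range, nsmul_eq_mul, mul_one]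
        push_cast; ring
      rw [sum1] at key
      have hb : ((b' : ℚ) + 1) ≠ 0 := by positivity
      field_simp at key
      exact key


theorem zWeight_pos (d : ℕ →₀ ℕ) : 0 < zWeight d := by
  refine Finset.prod_pos fun n _ => ?_
  have h1 : (0 : ℚ) < ((n : ℚ) + 1) ^ (d n) := by positivity
  have h2 : (0 : ℚ) < ((d n).factorial : ℚ) := by exact_mod_cast (d n).factorial_pos
  exact mul_pos h1 h2

theorem zWeight_eq_prod {d : ℕ →₀ ℕ} {S : Finset ℕ} (hS : d.support ⊆ S) :
    zWeight d = ∏ n ∈ S, ((n : ℚ) + 1) ^ (d n) * ((d n).factorial : ℚ) := by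
  refine Finset.prod_subset hS fun n _ hn => ?_
  rw [Finsupp.notMem_support_iff.mp hn]
  simp

theorem zWeight_add_single (d : ℕ →₀ ℕ) (i : ℕ) :
    zWeight (d + Finsupp.single i 1) = ((i : ℚ) + 1) * ((d i : ℚ) + 1) * zWeight d := by
  classical
  set S : Finset ℕ := insert i d.support with hSdef
  set d' : ℕ →₀ ℕ := d + Finsupp.single i 1 with hd'
  have hsub : d'.support ⊆ S := by
    refine subset_trans Finsupp.support_add ?_
    refine Finset.union_subset (Finset.subset_insert _ _) ?_
    intro n hn
    rw [Finsupp.support_single_ne_zero i one_ne_zero] at hn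
    rw [Finset.mem_singleton] at hn
    rw [hn]; exact Finset.mem_insert_self _ _
  have hsub2 : d.support ⊆ S := Finset.subset_insert _ _
  rw [zWeight_eq_prod hsub, zWeight_eq_prod hsub2]
  have hiS : i ∈ S := Finset.mem_insert_self _ _
  rw [← Finset.mul_prod_erase S (fun n => ((n : ℚ) + 1) ^ (d' n) * ((d' n).factorial : ℚ)) hiS,
    ← Finset.mul_prod_erase S (fun n => ((n : ℚ) + 1) ^ (d n) * ((d n).factorial : ℚ)) hiS]
  have hval : d' i = d i + 1 := by
    rw [hd', Finsupp.add_apply, Finsupp.single_apply, if_pos rfl]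
  have hoff : ∀ n, n ≠ i → d' n = d n := by
    intro n hn
    rw [hd', Finsupp.add_apply, Finsupp.single_apply, if_neg (fun hc => hn hc.symm), add_zero]
  have hrest : ∏ n ∈ S.erase i, ((n : ℚ) + 1) ^ (d' n) * ((d' n).factorial : ℚ)
      = ∏ n ∈ S.erase i, ((n : ℚ) + 1) ^ (d n) * ((d n).factorial : ℚ) := by
    refine Finset.prod_congr rfl fun n hn => ?_
    rw [hoff n (Finset.ne_of_mem_erase hn)]
  rw [hval, hrest, pow_succ, Nat.factorial_succ]
  push_cast
  ring

theorem hall_eq_sum {f : Lam} (g : Lam) {S : Finset (ℕ →₀ ℕ)} (hS : f.support ⊆ S) :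
    hallForm f g = ∑ d ∈ S, MvPolynomial.coeff d f * MvPolynomial.coeff d g * zWeight d := by
  refine Finset.sum_subset hS fun d _ hd => ?_
  rw [MvPolynomial.notMem_support_iff.mp hd, zero_mul, zero_mul]

theorem hall_comm (f g : Lam) : hallForm f g = hallForm g f := by
  rw [hall_eq_sum g (Finset.subset_union_left : f.support ⊆ f.support ∪ g.support),
    hall_eq_sum f (Finset.subset_union_right : g.support ⊆ f.support ∪ g.support)]
  exact Finset.sum_congr rfl fun d _ => by ring

theorem hall_zero_left (g : Lam) : hallForm 0 g = 0 := by
  simp [hallForm]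

theorem hall_zero_right (f : Lam) : hallForm f 0 = 0 := by
  simp [hallForm]

theorem hall_add_left (f₁ f₂ g : Lam) : hallForm (f₁ + f₂) g = hallForm f₁ g + hallForm f₂ g := by
  classical
  have h1 : (f₁ + f₂).support ⊆ f₁.support ∪ f₂.support := MvPolynomial.support_add
  rw [hall_eq_sum g h1, hall_eq_sum g (Finset.subset_union_left : f₁.support ⊆ f₁.support ∪ f₂.support),
    hall_eq_sum g (Finset.subset_union_right : f₂.support ⊆ f₁.support ∪ f₂.support),
    ← Finset.sum_add_distrib]
  refine Finset.sum_congr rfl fun d _ => ?_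
  rw [MvPolynomial.coeff_add]
  ring

theorem hall_add_right (f g₁ g₂ : Lam) : hallForm f (g₁ + g₂) = hallForm f g₁ + hallForm f g₂ := by
  rw [hall_comm, hall_add_left, hall_comm g₁ f, hall_comm g₂ f]

theorem hall_monomial_left (d : ℕ →₀ ℕ) (a : ℚ) (g : Lam) :
    hallForm (monomial d a) g = a * MvPolynomial.coeff d g * zWeight d := by
  classical
  rw [hall_eq_sum g MvPolynomial.support_monomial_subset, Finset.sum_singleton,
    MvPolynomial.coeff_monomial, if_pos rfl]

theorem hall_self_pos {f : Lam} (hf : f ≠ 0) : 0 < hallForm f f := by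
  rw [hallForm]
  refine Finset.sum_pos (fun d hd => ?_) ?_
  · have h1 : MvPolynomial.coeff d f ≠ 0 := MvPolynomial.mem_support_iff.mp hd
    have : 0 < MvPolynomial.coeff d f * MvPolynomial.coeff d f := mul_self_pos.mpr h1
    exact mul_pos this (zWeight_pos d)
  · rw [Finset.nonempty_iff_ne_empty]
    intro h
    exact hf (MvPolynomial.support_eq_empty.mp h)

theorem hall_nondeg {u : Lam} (h : ∀ g, hallForm u g = 0) : u = 0 := by
  by_contra hu
  exact (hall_self_pos hu).ne' (h u)

theorem hall_X_mul (i : ℕ) (f g : Lam) :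
    hallForm (X i * f) g = hallForm f (((i : ℚ) + 1) • pderiv i g) := by
  classical
  induction f using MvPolynomial.induction_on' generalizing g with
  | add p q hp hq =>
    rw [mul_add, hall_add_left, hall_add_left, hp, hq]
  | monomial d a =>
    induction g using MvPolynomial.induction_on' with
    | add p q hp hq =>
      rw [map_add, smul_add, hall_add_right, hall_add_right, hp, hq]
    | monomial e b =>
      rw [show (MvPolynomial.X i : Lam) * MvPolynomial.monomial d a = MvPolynomial.monomial (d + Finsupp.single i 1) a by
        rw [MvPolynomial.X, MvPolynomial.monomial_mul, one_mul, add_comm]]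
      rw [pderiv_monomial, MvPolynomial.smul_monomial, hall_monomial_left, hall_monomial_left,
        MvPolynomial.coeff_monomial, MvPolynomial.coeff_monomial]
      by_cases h : e = d + Finsupp.single i 1
      · subst h
        rw [if_pos rfl]
        have h2 : (d + Finsupp.single i 1) - Finsupp.single i 1 = d := by
          ext n
          rw [Finsupp.tsub_apply, Finsupp.add_apply]
          omega
        rw [h2, if_pos rfl, zWeight_add_single]
        have h3 : ((d + Finsupp.single i 1 : ℕ →₀ ℕ) i : ℚ) = (d i : ℚ) + 1 := by
          rw [Finsupp.add_apply, Finsupp.single_apply, if_pos rfl]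
          push_cast; ring
        rw [h3]
        simp only [smul_eq_mul]
        push_cast
        ring
      · rw [if_neg h]
        by_cases h2 : e - Finsupp.single i 1 = d
        · rw [if_pos h2]
          have h3 : e i = 0 := by
            by_contra h3
            apply h
            refine Finsupp.ext fun n => ?_
            have hn := DFunLike.congr_fun h2 n
            rw [Finsupp.tsub_apply] at hn
            rw [Finsupp.add_apply]
            rw [Finsupp.single_apply] at hn ⊢
            rcases eq_or_ne i n with rfl | hne
            · rw [if_pos rfl] at hn ⊢; omega
            · rw [if_neg hne] at hn ⊢; omega
          rw [h3]
          simp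
        · rw [if_neg h2]
          simp




noncomputable def F₀ : PowerSeries Lam :=
  PowerSeries.mk fun k => if k = 0 then 0 else (k : ℚ)⁻¹ • pVar k

theorem hPoly_eq (n : ℕ) : hPoly n = coeff n (psE F₀) := rfl

theorem constantCoeff_F₀ : constantCoeff F₀ = 0 := by
  rw [← coeff_zero_eq_constantCoeff, F₀, coeff_mk]; simp

theorem hPoly_zero : hPoly 0 = 1 := by
  rw [hPoly_eq, coeff_psE]
  simp [PowerSeries.coeff_one]

noncomputable def pdC (i : ℕ) (F : PowerSeries Lam) : PowerSeries Lam :=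
  PowerSeries.mk fun n => pderiv i (coeff n F)

theorem coeff_pdC (i : ℕ) (F : PowerSeries Lam) (n : ℕ) :
    coeff n (pdC i F) = pderiv i (coeff n F) := coeff_mk _ _

theorem pdC_mul (i : ℕ) (F G : PowerSeries Lam) :
    pdC i (F * G) = pdC i F * G + F * pdC i G := by
  refine PowerSeries.ext fun n => ?_
  rw [map_add, coeff_pdC, PowerSeries.coeff_mul, map_sum, PowerSeries.coeff_mul, PowerSeries.coeff_mul, ← Finset.sum_add_distrib]
  refine Finset.sum_congr rfl fun p _ => ?_
  rw [coeff_pdC, coeff_pdC, pderiv_mul]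

theorem pdC_pow (i : ℕ) (F : PowerSeries Lam) :
    ∀ k : ℕ, pdC i (F ^ (k + 1)) = (k + 1) • (F ^ k * pdC i F) := by
  intro k
  induction k with
  | zero => simp
  | succ k ih =>
    have h1 : F ^ (k + 2) = F ^ (k + 1) * F := pow_succ F (k + 1)
    rw [h1, pdC_mul, ih, smul_mul_assoc]
    have h2 : F ^ k * pdC i F * F = F ^ (k + 1) * pdC i F := by ring
    rw [h2]
    exact (succ_nsmul _ (k + 1)).symm

theorem pdC_F₀ (i : ℕ) : pdC i F₀ = ((i : ℚ) + 1)⁻¹ • ((X : PowerSeries Lam) ^ (i + 1)) := by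
  refine PowerSeries.ext fun n => ?_
  rw [coeff_pdC, map_rat_smul, PowerSeries.coeff_X_pow, F₀, coeff_mk]
  rcases eq_or_ne n (i + 1) with rfl | hne
  · rw [if_pos rfl, if_neg (Nat.succ_ne_zero i)]
    have h1 : pderiv i (pVar (i + 1)) = 1 := by
      rw [pVar, Nat.add_sub_cancel, pderiv_X_self]
    rw [map_rat_smul, h1]
    norm_cast
  · rw [if_neg hne, smul_zero]
    rcases eq_or_ne n 0 with rfl | h0
    · rw [if_pos rfl, map_zero]
    · rw [if_neg h0, map_rat_smul]
      have h1 : pderiv i (pVar n) = 0 := by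
        rw [pVar]
        exact pderiv_X_of_ne (by omega)
      rw [h1, smul_zero]

theorem Ei_hPoly (i m : ℕ) :
    ((i : ℚ) + 1) • pderiv i (hPoly m)
      = if i + 1 ≤ m then hPoly (m - (i + 1)) else 0 := by
  have h1 : pderiv i (hPoly m)
      = ∑ k ∈ range (m + 1), (k.factorial : ℚ)⁻¹ • pderiv i (coeff m (F₀ ^ k)) := by
    rw [hPoly_eq, coeff_psE, map_sum]
    exact Finset.sum_congr rfl fun k _ => map_rat_smul (pderiv i) _ _
  have h2 : ∀ k : ℕ, pderiv i (coeff m (F₀ ^ (k + 1)))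
      = ((k : ℚ) + 1) • (((i : ℚ) + 1)⁻¹ •
          (if i + 1 ≤ m then coeff (m - (i + 1)) (F₀ ^ k) else 0)) := by
    intro k
    rw [← coeff_pdC, pdC_pow, pdC_F₀, mul_smul_comm, map_nsmul, map_rat_smul]
    rw [PowerSeries.coeff_mul_X_pow']
    rw [← Nat.cast_smul_eq_nsmul ℚ]
    push_cast
    rfl
  rw [h1, Finset.sum_range_succ']
  have h0 : (Nat.factorial 0 : ℚ)⁻¹ • pderiv i (coeff m (F₀ ^ 0)) = 0 := by
    rw [pow_zero, PowerSeries.coeff_one]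
    split_ifs <;> simp
  rw [h0, add_zero]
  by_cases him : i + 1 ≤ m
  · rw [if_pos him]
    have h3 : ∀ k ∈ range m, ((k + 1).factorial : ℚ)⁻¹ • pderiv i (coeff m (F₀ ^ (k + 1)))
        = ((i : ℚ) + 1)⁻¹ • ((k.factorial : ℚ)⁻¹ • coeff (m - (i + 1)) (F₀ ^ k)) := by
      intro k _
      rw [h2 k, if_pos him, smul_smul, smul_smul, smul_smul]
      congr 1
      rw [fact_succ_inv]
      ring
    rw [Finset.sum_congr rfl h3, ← Finset.smul_sum, smul_smul,
      mul_inv_cancel₀ (by positivity : ((i : ℚ) + 1) ≠ 0), one_smul]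
    have h4 : ∑ k ∈ range m, (k.factorial : ℚ)⁻¹ • coeff (m - (i + 1)) (F₀ ^ k)
        = ∑ k ∈ range (m - (i + 1) + 1), (k.factorial : ℚ)⁻¹ • coeff (m - (i + 1)) (F₀ ^ k) := by
      refine (Finset.sum_subset (Finset.range_subset_range.2 (by omega)) fun k _ hk => ?_).symm
      rw [Finset.mem_range] at hk
      rw [coeff_pow_eq_zero constantCoeff_F₀ (by omega), smul_zero]
    rw [h4, hPoly_eq, coeff_psE]
  · rw [if_neg him]
    have h3 : ∀ k ∈ range m, ((k + 1).factorial : ℚ)⁻¹ • pderiv i (coeff m (F₀ ^ (k + 1))) = 0 := by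
      intro k _
      rw [h2 k, if_neg him, smul_zero, smul_zero, smul_zero]
    rw [Finset.sum_congr rfl h3, Finset.sum_const, smul_zero, smul_zero]

theorem constantCoeff_hPoly (n : ℕ) :
    MvPolynomial.constantCoeff (hPoly n) = if n = 0 then 1 else 0 := by
  have h1 : MvPolynomial.constantCoeff (hPoly n)
      = coeff n (psE (PowerSeries.map (MvPolynomial.constantCoeff) F₀)) := by
    rw [hPoly_eq, ← map_psE, PowerSeries.coeff_map]
  have h2 : PowerSeries.map (MvPolynomial.constantCoeff (σ := ℕ) (R := ℚ)) F₀ = 0 := by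
    refine PowerSeries.ext fun k => ?_
    rw [PowerSeries.coeff_map, F₀, coeff_mk, map_zero]
    rcases eq_or_ne k 0 with rfl | hk
    · rw [if_pos rfl, map_zero]
    · rw [if_neg hk, map_rat_smul, pVar, constantCoeff_X, smul_zero]
  rw [h1, h2, coeff_psE]
  rw [Finset.sum_eq_single 0 (fun k _ hk => by rw [zero_pow hk, map_zero, smul_zero])
    (fun h => absurd (Finset.mem_range.mpr (Nat.succ_pos n)) h)]
  simp [PowerSeries.coeff_one]




noncomputable def Phi : Lam →ₐ[ℚ] Polynomial Lam :=
  aeval fun i => Polynomial.C (MvPolynomial.X i) + Polynomial.X ^ (i + 1)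

theorem Phi_hPoly (n : ℕ) :
    Phi (hPoly n) = ∑ ij ∈ Finset.HasAntidiagonal.antidiagonal n,
      Polynomial.C (hPoly ij.1) * Polynomial.X ^ ij.2 := by
  have h1 : Phi (hPoly n)
      = PowerSeries.coeff n (psE (PowerSeries.map Phi.toRingHom F₀)) := by
    rw [hPoly_eq, ← map_psE]
    exact (PowerSeries.coeff_map _ _ _).symm
  have hsplit : PowerSeries.map Phi.toRingHom F₀
      = PowerSeries.map (Polynomial.C : Lam →+* Polynomial Lam) F₀
        + PowerSeries.rescale (Polynomial.X : Polynomial Lam)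
            (PowerSeries.map (algebraMap ℚ (Polynomial Lam)) Lq) := by
    refine PowerSeries.ext fun k => ?_
    rw [map_add, PowerSeries.coeff_map, PowerSeries.coeff_map, PowerSeries.coeff_rescale,
      PowerSeries.coeff_map, F₀, Lq, coeff_mk, coeff_mk]
    rcases eq_or_ne k 0 with rfl | hk
    · simp
    · rw [if_neg hk, if_neg hk, map_rat_smul, map_rat_smul]
      have hv : Phi.toRingHom (pVar k)
          = Polynomial.C (MvPolynomial.X (k - 1)) + Polynomial.X ^ ((k - 1) + 1) := by
        exact MvPolynomial.aeval_X _ (k - 1)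
      have hk1 : (k - 1) + 1 = k := by omega
      rw [hv, hk1, smul_add]
      congr 1
      rw [Algebra.smul_def, mul_comm]
  have hF1 : constantCoeff
      (PowerSeries.map (Polynomial.C : Lam →+* Polynomial Lam) F₀) = 0 := by
    rw [← coeff_zero_eq_constantCoeff, PowerSeries.coeff_map, coeff_zero_eq_constantCoeff,
      constantCoeff_F₀, map_zero]
  have hG1 : constantCoeff
      (PowerSeries.rescale (Polynomial.X : Polynomial Lam)
        (PowerSeries.map (algebraMap ℚ (Polynomial Lam)) Lq)) = 0 := by
    rw [← coeff_zero_eq_constantCoeff, PowerSeries.coeff_rescale, pow_zero, one_mul,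
      PowerSeries.coeff_map, coeff_zero_eq_constantCoeff, constantCoeff_Lq, map_zero]
  rw [h1, hsplit, psE_mul hF1 hG1, PowerSeries.coeff_mul]
  refine Finset.sum_congr rfl fun ij _ => ?_
  congr 1
  · rw [← map_psE, PowerSeries.coeff_map, hPoly_eq]
  · rw [coeff_psE]
    have hterm : ∀ k ∈ range (ij.2 + 1),
        (k.factorial : ℚ)⁻¹ • PowerSeries.coeff ij.2
          ((PowerSeries.rescale (Polynomial.X : Polynomial Lam)
            (PowerSeries.map (algebraMap ℚ (Polynomial Lam)) Lq)) ^ k)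
        = Polynomial.X ^ ij.2 * ((k.factorial : ℚ)⁻¹ • PowerSeries.coeff ij.2
            ((PowerSeries.map (algebraMap ℚ (Polynomial Lam)) Lq) ^ k)) := by
      intro k _
      rw [← map_pow, PowerSeries.coeff_rescale, mul_smul_comm]
    rw [Finset.sum_congr rfl hterm, ← Finset.mul_sum, ← coeff_psE, ← map_psE,
      PowerSeries.coeff_map, coeff_psE_Lq, map_one, mul_one]

theorem coeff_Phi_hPoly (n a : ℕ) :
    (Phi (hPoly n)).coeff a = if a ≤ n then hPoly (n - a) else 0 := by
  rw [Phi_hPoly, Polynomial.finset_sum_coeff]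
  have h1 : ∀ ij ∈ Finset.HasAntidiagonal.antidiagonal n,
      (Polynomial.C (hPoly ij.1) * Polynomial.X ^ ij.2).coeff a
        = if a = ij.2 then hPoly ij.1 else 0 := by
    intro ij _
    rw [Polynomial.coeff_C_mul, Polynomial.coeff_X_pow]
    split_ifs <;> simp
  rw [Finset.sum_congr rfl h1, Finset.Nat.sum_antidiagonal_eq_sum_range_succ_mk]
  by_cases ha : a ≤ n
  · rw [if_pos ha]
    rw [Finset.sum_eq_single (n - a) (fun k hk hne => by
        rw [Finset.mem_range] at hk
        exact if_neg (by omega))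
      (fun h => absurd (Finset.mem_range.mpr (by omega)) h)]
    rw [if_pos (by omega)]
  · rw [if_neg ha]
    refine Finset.sum_eq_zero fun k hk => ?_
    rw [Finset.mem_range] at hk
    exact if_neg (by omega)

theorem hall_Phi_adj (f : Lam) : ∀ (m : ℕ) (g : Lam),
    hallForm ((Phi f).coeff m) g = hallForm f (hPoly m * g) := by
  induction f using MvPolynomial.induction_on with
  | C a =>
    intro m g
    have hPhiC : Phi (MvPolynomial.C a) = Polynomial.C (MvPolynomial.C a) := by
      rw [show (MvPolynomial.C a : Lam) = algebraMap ℚ Lam a from rfl, AlgHom.commutes]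
      rw [Polynomial.algebraMap_apply]
    rw [hPhiC, Polynomial.coeff_C]
    rcases eq_or_ne m 0 with rfl | hm
    · rw [if_pos rfl, hPoly_zero, one_mul]
    · rw [if_neg hm, hall_zero_left]
      have hc : MvPolynomial.coeff 0 (hPoly m * g) = 0 := by
        have h2 : MvPolynomial.constantCoeff (hPoly m * g) = 0 := by
          rw [map_mul, constantCoeff_hPoly, if_neg hm, zero_mul]
        rwa [MvPolynomial.constantCoeff_eq] at h2
      rw [show (MvPolynomial.C a : Lam) = MvPolynomial.monomial 0 a from MvPolynomial.C_apply,
        hall_monomial_left, hc, mul_zero, zero_mul]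
  | add p q ihp ihq =>
    intro m g
    rw [map_add, Polynomial.coeff_add, hall_add_left, hall_add_left, ihp, ihq]
  | mul_X p i ih =>
    intro m g
    have hX : Phi (MvPolynomial.X i)
        = Polynomial.C (MvPolynomial.X i) + Polynomial.X ^ (i + 1) :=
      MvPolynomial.aeval_X _ i
    rw [map_mul, hX, mul_add, Polynomial.coeff_add, Polynomial.coeff_mul_C,
      Polynomial.coeff_mul_X_pow', hall_add_left]
    have L1 : hallForm ((Phi p).coeff m * MvPolynomial.X i) g
        = hallForm p (hPoly m * (((i : ℚ) + 1) • pderiv i g)) := by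
      rw [mul_comm, hall_X_mul, ih]
    rw [mul_comm p (MvPolynomial.X i), hall_X_mul]
    have hEi : ((i : ℚ) + 1) • pderiv i (hPoly m * g)
        = (if i + 1 ≤ m then hPoly (m - (i + 1)) else 0) * g
          + hPoly m * (((i : ℚ) + 1) • pderiv i g) := by
      rw [pderiv_mul, smul_add, ← smul_mul_assoc, ← mul_smul_comm, Ei_hPoly]
    rw [hEi, hall_add_right, L1]
    by_cases him : i + 1 ≤ m
    · rw [if_pos him, if_pos him, ih]
      exact add_comm _ _
    · rw [if_neg him, if_neg him, hall_zero_left, zero_mul, hall_zero_right]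
      rw [add_zero, zero_add]


/-- Let `h_n` denote multiplication by the `n`-th complete homogeneous symmetric function on
`Λ`, and let `h*_n` be its adjoint with respect to the Hall inner product (the skewing
operator).  Then for all `m, n ≥ 1`: `h*_m ∘ h_n - h_n ∘ h*_m = h*_{m-1} ∘ h_{n-1}`
(with `h_0 = h*_0 = id`; note that the adjointness hypothesis forces `h*_0 = id`). -/
theorem hstar_comp_h_commutation_relation
    (hstar : ℕ → Module.End ℚ Lam)
    (hadj : ∀ (n : ℕ) (f g : Lam), hallForm (hstar n f) g = hallForm f (hPoly n * g))
    (m n : ℕ) (hm : 1 ≤ m) (hn : 1 ≤ n) :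
    hstar m * hMul n - hMul n * hstar m = hstar (m - 1) * hMul (n - 1) := by
  have hD : ∀ (k : ℕ) (f : Lam), hstar k f = (Phi f).coeff k := by
    intro k f
    have hz : ∀ g, hallForm (hstar k f - (Phi f).coeff k) g = 0 := by
      intro g
      have h1 := hall_add_left (hstar k f - (Phi f).coeff k) ((Phi f).coeff k) g
      rw [sub_add_cancel] at h1
      have h2 := hadj k f g
      have h3 := hall_Phi_adj f k g
      linarith
    exact sub_eq_zero.mp (hall_nondeg hz)
  refine LinearMap.ext fun f => ?_
  simp only [LinearMap.sub_apply, Module.End.mul_apply, hMul, LinearMap.mulLeft_apply]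
  rw [hD, hD, hD, map_mul, map_mul, Polynomial.coeff_mul, Polynomial.coeff_mul,
    Finset.Nat.sum_antidiagonal_eq_sum_range_succ_mk,
    Finset.Nat.sum_antidiagonal_eq_sum_range_succ_mk]
  have e1 : ∀ k ∈ range (m + 1), (Phi (hPoly n)).coeff k * (Phi f).coeff (m - k)
      = (if k ≤ n then hPoly (n - k) else 0) * (Phi f).coeff (m - k) :=
    fun k _ => by rw [coeff_Phi_hPoly]
  have e2 : ∀ k ∈ range (m - 1 + 1), (Phi (hPoly (n - 1))).coeff k * (Phi f).coeff (m - 1 - k)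
      = (if k ≤ n - 1 then hPoly (n - 1 - k) else 0) * (Phi f).coeff (m - 1 - k) :=
    fun k _ => by rw [coeff_Phi_hPoly]
  rw [Finset.sum_congr rfl e1, Finset.sum_congr rfl e2, Finset.sum_range_succ']
  rw [show m - 1 + 1 = m from by omega]
  have e0 : (if 0 ≤ n then hPoly (n - 0) else 0) * (Phi f).coeff (m - 0)
      = hPoly n * (Phi f).coeff m := by
    rw [if_pos (Nat.zero_le n), Nat.sub_zero, Nat.sub_zero]
  rw [e0, add_sub_cancel_right]
  refine Finset.sum_congr rfl fun k hk => ?_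
  rw [show n - (k + 1) = n - 1 - k from by omega, show m - (k + 1) = m - 1 - k from by omega]
  by_cases hkn : k + 1 ≤ n
  · rw [if_pos hkn, if_pos (show k ≤ n - 1 by omega)]
  · rw [if_neg hkn, if_neg (show ¬ k ≤ n - 1 by omega)]
end
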